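/- arXiv:2004.09436 — 15 statements merged into one kernel-verified Lean document; each statement's English description precedes it below -/
import Mathlib

section
/- Let p be an odd prime, n a positive integer, and d a positive integer. The monomial x^d is perfect (-1)-nonlinear on F_{p^n} (i.e., for every a in F_{p^n}, the map x ↦ (x+a)^d + x^d is a bijection of F_{p^n}) if and only if both x ↦ x^d and x ↦ (x+1)^d + (x-1)^d are bijections of F_{p^n}. -/
theorem stmt_0 (p n d : ℕ) (hp : p.Prime) (hp2 : p ≠ 2) (hn : 0 < n) (hd : 0 < d)
    (F : Type) [Field F] [Fintype F] (hF : Fintype.card F = p ^ n) :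
    (∀ a : F, Function.Bijective fun x : F => (x + a) ^ d + x ^ d) ↔
      (Function.Bijective fun x : F => x ^ d) ∧
        (Function.Bijective fun x : F => (x + 1) ^ d + (x - 1) ^ d) := by
  -- characteristic is p, so 2 ≠ 0
  have h2 : (2 : F) ≠ 0 := by
    intro h
    haveI : CharP F (ringChar F) := ringChar.charP F
    obtain ⟨m, hq, hcard⟩ := FiniteField.card F (ringChar F)
    have hpq : p = ringChar F := by
      have hdvd : p ∣ (ringChar F) ^ (m : ℕ) := by
        rw [← hcard, hF]
        exact dvd_pow_self p hn.ne'
      have := hp.dvd_of_dvd_pow hdvd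
      exact ((Nat.prime_dvd_prime_iff_eq hp hq).mp this)
    have : ((2 : ℕ) : F) = 0 := by exact_mod_cast h
    have := (CharP.cast_eq_zero_iff F (ringChar F) 2).mp this
    have h2p : ringChar F ∣ 2 := this
    rw [← hpq] at h2p
    exact hp2 ((Nat.prime_dvd_prime_iff_eq hp Nat.prime_two).mp h2p)
  constructor
  · intro h
    constructor
    · have h0 := h 0
      have heq : (fun x : F => x ^ d) =
          (fun y : F => (2 : F)⁻¹ * y) ∘ (fun x : F => (x + 0) ^ d + x ^ d) := by
        funext x
        simp only [Function.comp, add_zero]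
        field_simp
        ring
      rw [heq]
      exact (mulLeft_bijective₀ _ (inv_ne_zero h2)).comp h0
    · have h2' := h 2
      have heq : (fun x : F => (x + 1) ^ d + (x - 1) ^ d) =
          (fun x : F => (x + 2) ^ d + x ^ d) ∘ (fun x : F => x - 1) := by
        funext x
        simp only [Function.comp]
        ring_nf
      rw [heq]
      exact h2'.comp (Equiv.subRight (1 : F)).bijective
  · rintro ⟨h1, hg⟩ a
    rcases eq_or_ne a 0 with rfl | ha
    · have heq : (fun x : F => (x + 0) ^ d + x ^ d) =
          (fun y : F => (2 : F) * y) ∘ (fun x : F => x ^ d) := by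
        funext x
        simp only [Function.comp, add_zero]
        ring
      rw [heq]
      exact (mulLeft_bijective₀ _ h2).comp h1
    · set c : F := a / 2 with hc
      have hc0 : c ≠ 0 := div_ne_zero ha h2
      have heq : (fun x : F => (x + a) ^ d + x ^ d) =
          (fun y : F => c ^ d * y) ∘ (fun x : F => (x + 1) ^ d + (x - 1) ^ d) ∘
            (fun x : F => x / c + 1) := by
        funext x
        simp only [Function.comp]
        have e1 : x / c + 1 + 1 = (x + a) / c := by
          field_simp [hc]
          haveI : NeZero (2 : F) := ⟨h2⟩
          rw [hc, add_assoc, add_halves]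
        have e2 : x / c + 1 - 1 = x / c := by ring
        rw [e1, e2]
        simp only [div_pow]
        rw [mul_add, mul_div_assoc', mul_div_assoc', mul_div_cancel_left₀ _ (pow_ne_zero d hc0),
          mul_div_cancel_left₀ _ (pow_ne_zero d hc0)]
      rw [heq]
      have hbij : Function.Bijective (fun x : F => x / c + 1) := by
        have hb := ((Equiv.addRight (1 : F)).bijective).comp
          (mulLeft_bijective₀ c⁻¹ (inv_ne_zero hc0))
        have : (fun x : F => x / c + 1) =
            (fun y : F => y + 1) ∘ (fun x : F => c⁻¹ * x) := by
          funext x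
          simp [Function.comp, div_eq_mul_inv, mul_comm]
        rw [this]
        exact hb
      exact (mulLeft_bijective₀ _ (pow_ne_zero d hc0)).comp (hg.comp hbij)
end

section
/- Let p be an odd prime and ℓ, n positive integers with ℓ ≤ n. If n / gcd(ℓ, n) is odd, then gcd(p^ℓ + 1, p^n - 1) = 2. -/
theorem stmt_2 (p ℓ n : ℕ) (hp : p.Prime) (hp2 : p ≠ 2) (hℓ : 0 < ℓ) (hn : 0 < n)
    (hle : ℓ ≤ n) (h : Odd (n / Nat.gcd ℓ n)) :
    Nat.gcd (p ^ ℓ + 1) (p ^ n - 1) = 2 := by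
  set g := Nat.gcd (p ^ ℓ + 1) (p ^ n - 1) with hgdef
  have hpodd : Odd p := hp.odd_of_ne_two hp2
  have hp1 : 1 ≤ p := hp.one_lt.le
  have hpn1 : 1 ≤ p ^ n := Nat.one_le_pow _ _ hp.pos
  have hg1 : g ∣ p ^ ℓ + 1 := Nat.gcd_dvd_left _ _
  have hg2 : g ∣ p ^ n - 1 := Nat.gcd_dvd_right _ _
  -- 2 divides g
  have h2g : 2 ∣ g := by
    refine Nat.dvd_gcd ?_ ?_
    · have : Odd (p ^ ℓ) := hpodd.pow
      obtain ⟨k, hk⟩ := this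
      exact ⟨k + 1, by omega⟩
    · have : Odd (p ^ n) := hpodd.pow
      obtain ⟨k, hk⟩ := this
      exact ⟨k, by omega⟩
  have hgne : g ≠ 0 := by
    intro h0
    rw [h0] at hg1
    have := Nat.eq_zero_of_zero_dvd hg1
    omega
  haveI : NeZero g := ⟨hgne⟩
  -- work in ZMod g
  have hA : (p : ZMod g) ^ ℓ = -1 := by
    have : ((p ^ ℓ + 1 : ℕ) : ZMod g) = 0 := (ZMod.natCast_eq_zero_iff _ _).mpr hg1
    push_cast at this
    linear_combination this
  have hB : (p : ZMod g) ^ n = 1 := by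
    have : ((p ^ n - 1 : ℕ) : ZMod g) = 0 := (ZMod.natCast_eq_zero_iff _ _).mpr hg2
    rw [Nat.cast_sub hpn1] at this
    push_cast at this
    linear_combination this
  have hord1 : orderOf (p : ZMod g) ∣ n := orderOf_dvd_of_pow_eq_one hB
  have hord2 : orderOf (p : ZMod g) ∣ 2 * ℓ := by
    apply orderOf_dvd_of_pow_eq_one
    rw [pow_mul', hA]
    ring
  -- gcd (2ℓ) n = gcd ℓ n
  set d := Nat.gcd ℓ n with hddef
  have hd0 : 0 < d := Nat.gcd_pos_of_pos_left _ hℓ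
  have hgcdeq : Nat.gcd (2 * ℓ) n = d := by
    have hde : d ∣ Nat.gcd (2 * ℓ) n :=
      Nat.dvd_gcd ((Nat.gcd_dvd_left ℓ n).mul_left 2) (Nat.gcd_dvd_right ℓ n)
    have hed : Nat.gcd (2 * ℓ) n ∣ 2 * d := by
      have : Nat.gcd (2 * ℓ) n ∣ Nat.gcd (2 * ℓ) (2 * n) :=
        Nat.dvd_gcd (Nat.gcd_dvd_left _ _) ((Nat.gcd_dvd_right _ _).mul_left 2)
      rwa [Nat.gcd_mul_left] at this
    obtain ⟨k, hk⟩ := hde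
    have hkd : k ∣ 2 := (mul_dvd_mul_iff_left hd0.ne').mp
      (by rw [← hk, mul_comm d 2]; exact hed)
    have hgpos : 0 < Nat.gcd (2 * ℓ) n := Nat.gcd_pos_of_pos_right _ hn
    have hk1 : 1 ≤ k := by
      rcases Nat.eq_zero_or_pos k with h0 | h1
      · rw [hk, h0, mul_zero] at hgpos; omega
      · exact h1
    have hk2' : k ≤ 2 := Nat.le_of_dvd two_pos hkd
    interval_cases k
    · omega
    · exfalso
      have h2dn : 2 * d ∣ n := by
        have := Nat.gcd_dvd_right (2 * ℓ) n
        rw [hk] at this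
        rwa [mul_comm d 2] at this
      obtain ⟨m, hm⟩ := h2dn
      have : n / d = 2 * m := by
        rw [hm, show 2 * d * m = d * (2 * m) by ring, Nat.mul_div_cancel_left _ hd0]
      rw [this] at h
      exact (Nat.not_odd_iff_even.mpr ⟨m, by ring⟩) h
  have hordd : orderOf (p : ZMod g) ∣ d := by
    rw [← hgcdeq]
    exact Nat.dvd_gcd hord2 hord1
  have hordℓ : orderOf (p : ZMod g) ∣ ℓ := hordd.trans (Nat.gcd_dvd_left ℓ n)
  have hpl1 : (p : ZMod g) ^ ℓ = 1 := orderOf_dvd_iff_pow_eq_one.mp hordℓ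
  have h2zero : ((2 : ℕ) : ZMod g) = 0 := by
    push_cast
    linear_combination hA - hpl1
  have hg2' : g ∣ 2 := (ZMod.natCast_eq_zero_iff _ _).mp h2zero
  exact Nat.dvd_antisymm hg2' h2g
end

section
/- Let p be an odd prime and ℓ, n positive integers with ℓ ≤ n. If n / gcd(ℓ, n) is even, then gcd(p^ℓ + 1, p^n - 1) = p^{gcd(ℓ,n)} + 1. -/
open Finset in
lemma aux_odd_cofactor (x : ℤ) (hx : Odd x) {k : ℕ} (hk : Odd k) :
    ∃ c : ℤ, Odd c ∧ x ^ k + 1 = (x + 1) * c := by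
  refine ⟨∑ i ∈ range k, x ^ i * (-1 : ℤ) ^ (k - 1 - i), ?_, ?_⟩
  · rw [← Int.not_even_iff_odd]
    intro h2
    have h0 : ((∑ i ∈ range k, x ^ i * (-1 : ℤ) ^ (k - 1 - i) : ℤ) : ZMod 2) = 0 := by
      exact_mod_cast (ZMod.intCast_zmod_eq_zero_iff_dvd _ 2).mpr (by exact_mod_cast h2.two_dvd)
    have hx2 : ((x : ℤ) : ZMod 2) = 1 := by
      obtain ⟨j, hj⟩ := hx
      subst hj; push_cast; ring_nf; simp [show (2 : ZMod 2) = 0 from rfl]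
    rw [Int.cast_sum] at h0
    simp only [Int.cast_mul, Int.cast_pow, hx2, Int.cast_neg, Int.cast_one,
      show (-1 : ZMod 2) = 1 from rfl, one_pow, one_mul, sum_const, card_range,
      nsmul_eq_mul, mul_one] at h0
    have hk1 : ((k : ℕ) : ZMod 2) = 1 := by
      rw [← ZMod.natCast_mod, Nat.odd_iff.mp hk]; rfl
    rw [hk1] at h0
    exact one_ne_zero h0
  · have hgs := geom_sum₂_mul x (-1 : ℤ) k
    rw [sub_neg_eq_add, hk.neg_one_pow, sub_neg_eq_add] at hgs
    linarith [hgs]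

theorem stmt_3 (p ℓ n : ℕ) (hp : p.Prime) (hp2 : p ≠ 2) (hℓ : 0 < ℓ) (hn : 0 < n)
    (hle : ℓ ≤ n) (h : Even (n / Nat.gcd ℓ n)) :
    Nat.gcd (p ^ ℓ + 1) (p ^ n - 1) = p ^ Nat.gcd ℓ n + 1 := by
  set d := Nat.gcd ℓ n with hd
  have hd0 : 0 < d := Nat.gcd_pos_of_pos_left n hℓ
  set k := ℓ / d with hk
  set m := n / d with hm
  have hℓdk : ℓ = d * k := (Nat.mul_div_cancel' (Nat.gcd_dvd_left ℓ n)).symm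
  have hndm : n = d * m := (Nat.mul_div_cancel' (Nat.gcd_dvd_right ℓ n)).symm
  have hkm : Nat.Coprime k m := Nat.coprime_div_gcd_div_gcd hd0
  have hk0 : 0 < k := Nat.div_pos (Nat.le_of_dvd hℓ (Nat.gcd_dvd_left ℓ n)) hd0
  obtain ⟨m', hm'⟩ := h
  have hm2 : m = 2 * m' := by omega
  have hkodd : Odd k := by
    rcases Nat.even_or_odd k with he | ho
    · exfalso
      have h2 : (2 : ℕ) ∣ Nat.gcd k m := Nat.dvd_gcd he.two_dvd ⟨m', by omega⟩
      rw [hkm] at h2; omega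
    · exact ho
  have hp1 : 1 < p := hp.one_lt
  have hpodd : Odd p := hp.odd_of_ne_two hp2
  have hpℓ1 : 1 ≤ p ^ ℓ := Nat.one_le_pow _ _ (by omega)
  have hpn1 : 1 ≤ p ^ n := Nat.one_le_pow _ _ (by omega)
  have hpd1 : 1 ≤ p ^ d := Nat.one_le_pow _ _ (by omega)
  -- odd cofactor: p^ℓ + 1 = (p^d + 1) * c with c odd (in ℤ)
  obtain ⟨c, hcodd, hcid⟩ := aux_odd_cofactor ((p : ℤ) ^ d) (by exact_mod_cast hpodd.pow) hkodd
  have hcid' : ((p : ℤ)) ^ ℓ + 1 = ((p : ℤ) ^ d + 1) * c := by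
    rw [hℓdk, pow_mul]; exact hcid
  -- p^d + 1 divides p^ℓ + 1
  have hA : p ^ d + 1 ∣ p ^ ℓ + 1 := by
    have := Odd.nat_add_dvd_pow_add_pow (p ^ d) 1 hkodd
    simpa [hℓdk, pow_mul] using this
  -- p^d - 1 divides p^ℓ - 1
  have hB : p ^ d - 1 ∣ p ^ ℓ - 1 := by
    have := Nat.sub_dvd_pow_sub_pow (p ^ d) 1 k
    simpa [hℓdk, pow_mul] using this
  -- p^d + 1 divides p^n - 1
  have h2d : p ^ (2 * d) - 1 = (p ^ d + 1) * (p ^ d - 1) := by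
    have := Nat.sq_sub_sq (p ^ d) 1
    simpa [pow_mul, mul_comm 2 d] using this
  have hA2 : p ^ (2 * d) - 1 ∣ p ^ n - 1 := by
    have := Nat.sub_dvd_pow_sub_pow (p ^ (2 * d)) 1 m'
    have hn2 : n = 2 * d * m' := by rw [hndm, hm2]; ring
    simpa [hn2, pow_mul] using this
  have hAn : p ^ d + 1 ∣ p ^ n - 1 := (Dvd.intro _ h2d.symm).trans hA2
  set g := Nat.gcd (p ^ ℓ + 1) (p ^ n - 1) with hg
  have hAg : p ^ d + 1 ∣ g := Nat.dvd_gcd hA hAn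
  have hg0 : 0 < g := Nat.gcd_pos_of_pos_left _ (by omega)
  -- g divides p^(2d) - 1
  have he1 : ((p : ZMod g)) ^ ℓ = -1 := by
    have h0 : ((p ^ ℓ + 1 : ℕ) : ZMod g) = 0 :=
      (ZMod.natCast_eq_zero_iff _ _).mpr (Nat.gcd_dvd_left _ _)
    push_cast at h0
    exact eq_neg_of_add_eq_zero_left h0
  have he2 : ((p : ZMod g)) ^ n = 1 := by
    have hmod : (1 : ℕ) ≡ p ^ n [MOD g] :=
      (Nat.modEq_iff_dvd' hpn1).mpr (Nat.gcd_dvd_right _ _)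
    have h0 : ((1 : ℕ) : ZMod g) = ((p ^ n : ℕ) : ZMod g) :=
      (ZMod.natCast_eq_natCast_iff _ _ _).mpr hmod
    push_cast at h0
    exact h0.symm
  have he3 : ((p : ZMod g)) ^ (2 * ℓ) = 1 := by
    rw [mul_comm, pow_mul, he1]; ring
  have hgcd2 : Nat.gcd (2 * ℓ) n = 2 * d := by
    have hkm' : Nat.Coprime k m' := hkm.coprime_dvd_right ⟨2, by omega⟩
    have h2k : Nat.gcd (2 * k) m = 2 := by
      rw [hm2, Nat.gcd_mul_left, hkm']
    calc Nat.gcd (2 * ℓ) n = Nat.gcd (d * (2 * k)) (d * m) := by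
          rw [hℓdk, hndm, show 2 * (d * k) = d * (2 * k) from by ring]
      _ = d * Nat.gcd (2 * k) m := Nat.gcd_mul_left d _ m
      _ = 2 * d := by rw [h2k, mul_comm]
  have he4 : ((p : ZMod g)) ^ (2 * d) = 1 := by
    have := pow_gcd_eq_one.mpr ⟨he3, he2⟩
    rwa [hgcd2] at this
  have hgdvd : g ∣ p ^ (2 * d) - 1 := by
    have h0 : ((p ^ (2 * d) : ℕ) : ZMod g) = ((1 : ℕ) : ZMod g) := by push_cast; exact he4
    have hmod : p ^ (2 * d) ≡ 1 [MOD g] := (ZMod.natCast_eq_natCast_iff _ _ _).mp h0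
    exact (Nat.modEq_iff_dvd' (Nat.one_le_pow _ _ (by omega))).mp hmod.symm
  -- write g = (p^d + 1) * t
  obtain ⟨t, ht⟩ := hAg
  have htB : t ∣ p ^ d - 1 := by
    have h1 : (p ^ d + 1) * t ∣ (p ^ d + 1) * (p ^ d - 1) := by
      rw [← h2d, ← ht]; exact hgdvd
    exact (Nat.mul_dvd_mul_iff_left (by omega : 0 < p ^ d + 1)).mp h1
  have htℓ1 : t ∣ p ^ ℓ - 1 := htB.trans hB
  have htℓ2 : t ∣ p ^ ℓ + 1 := (Dvd.intro_left _ ht.symm).trans (Nat.gcd_dvd_left _ _)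
  have ht2 : t ∣ 2 := by
    have := Nat.dvd_sub htℓ2 htℓ1
    have he : (p ^ ℓ + 1) - (p ^ ℓ - 1) = 2 := by omega
    rwa [he] at this
  have ht0 : 1 ≤ t := by rcases Nat.eq_zero_or_pos t with h0 | h0; · subst h0; omega
                         · exact h0
  have htle : t ≤ 2 := Nat.le_of_dvd (by norm_num) ht2
  interval_cases t
  · omega
  · -- t = 2 : contradiction with odd cofactor
    exfalso
    have hdvd : ((p ^ d + 1) * 2 : ℕ) ∣ p ^ ℓ + 1 := ht ▸ Nat.gcd_dvd_left _ _
    have hdvdZ : ((p : ℤ) ^ d + 1) * 2 ∣ ((p : ℤ) ^ d + 1) * c := by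
      rw [← hcid']
      exact_mod_cast Int.natCast_dvd_natCast.mpr hdvd
    obtain ⟨e, he⟩ := hdvdZ
    have hX : ((p : ℤ) ^ d + 1) ≠ 0 := by positivity
    have hc2 : c = 2 * e := by
      have := he
      rw [mul_assoc] at this
      exact mul_left_cancel₀ hX this
    exact (Int.not_odd_iff_even.mpr ⟨e, by omega⟩) hcodd
end

section
/- Let ℓ, n be positive integers. Then gcd(2^ℓ + 1, 2^n - 1) = (2^{gcd(n, 2ℓ)} - 1) / (2^{gcd(n, ℓ)} - 1). -/
theorem aux_gcd_pow (s : ℕ) : ∀ m n : ℕ, m + n ≤ s →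
    Nat.gcd (2 ^ m - 1) (2 ^ n - 1) = 2 ^ Nat.gcd m n - 1 := by
  induction s with
  | zero =>
    intro m n h
    have hm : m = 0 := by omega
    have hn : n = 0 := by omega
    subst hm; subst hn; simp
  | succ s ih =>
    intro m n h
    rcases Nat.eq_zero_or_pos m with hm | hm
    · subst hm; simp
    rcases Nat.eq_zero_or_pos n with hn | hn
    · subst hn; simp
    rcases le_or_gt m n with hmn | hmn
    · have key : 2 ^ n - 1 = (2 ^ (n - m) - 1) + 2 ^ (n - m) * (2 ^ m - 1) := by
        have hab : 2 ^ (n - m) * 2 ^ m = 2 ^ n := by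
          rw [← pow_add]; congr 1; omega
        have h2 : (1:ℕ) ≤ 2 ^ (n - m) := Nat.one_le_two_pow
        have h3 : (1:ℕ) ≤ 2 ^ m := Nat.one_le_two_pow
        have hms : 2 ^ (n - m) * (2 ^ m - 1) = 2 ^ (n - m) * 2 ^ m - 2 ^ (n - m) := by
          rw [Nat.mul_sub_one]
        have hle : 2 ^ (n - m) ≤ 2 ^ n := Nat.pow_le_pow_right (by norm_num) (by omega)
        omega
      rw [key, Nat.gcd_add_mul_right_right]
      rw [ih m (n - m) (by omega), Nat.gcd_sub_self_right hmn]
    · have key : 2 ^ m - 1 = (2 ^ (m - n) - 1) + 2 ^ (m - n) * (2 ^ n - 1) := by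
        have hab : 2 ^ (m - n) * 2 ^ n = 2 ^ m := by
          rw [← pow_add]; congr 1; omega
        have h2 : (1:ℕ) ≤ 2 ^ (m - n) := Nat.one_le_two_pow
        have h3 : (1:ℕ) ≤ 2 ^ n := Nat.one_le_two_pow
        have hms : 2 ^ (m - n) * (2 ^ n - 1) = 2 ^ (m - n) * 2 ^ n - 2 ^ (m - n) := by
          rw [Nat.mul_sub_one]
        have hle : 2 ^ (m - n) ≤ 2 ^ m := Nat.pow_le_pow_right (by norm_num) (by omega)
        omega
      rw [Nat.gcd_comm, key, Nat.gcd_add_mul_right_right, Nat.gcd_comm]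
      rw [ih (m - n) n (by omega)]
      rw [Nat.gcd_comm m n, ← Nat.gcd_sub_self_right hmn.le, Nat.gcd_comm]

theorem gcd_two_pow_sub_one (m n : ℕ) :
    Nat.gcd (2 ^ m - 1) (2 ^ n - 1) = 2 ^ Nat.gcd m n - 1 :=
  aux_gcd_pow (m + n) m n le_rfl

theorem stmt_4 (ℓ n : ℕ) (hℓ : 0 < ℓ) (hn : 0 < n) :
    Nat.gcd (2 ^ ℓ + 1) (2 ^ n - 1) =
      (2 ^ Nat.gcd n (2 * ℓ) - 1) / (2 ^ Nat.gcd n ℓ - 1) := by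
  have h1 : (1:ℕ) ≤ 2 ^ ℓ := Nat.one_le_two_pow
  have hdvd2 : 2 ∣ 2 ^ ℓ := dvd_pow_self 2 hℓ.ne'
  have hodd : (2 ^ ℓ - 1) % 2 = 1 := by omega
  have hco : Nat.Coprime (2 ^ ℓ - 1) (2 ^ ℓ + 1) := by
    have hrw : 2 ^ ℓ + 1 = 2 + (2 ^ ℓ - 1) * 1 := by omega
    unfold Nat.Coprime
    rw [hrw, Nat.gcd_add_mul_left_right, Nat.gcd_comm, Nat.gcd_rec, hodd]
    simp
  have hmul := Nat.Coprime.gcd_mul (2 ^ n - 1) hco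
  have hprod : (2 ^ ℓ - 1) * (2 ^ ℓ + 1) = 2 ^ (2 * ℓ) - 1 := by
    have hab : 2 ^ ℓ * 2 ^ ℓ = 2 ^ (2 * ℓ) := by rw [← pow_add]; congr 1; omega
    have hms : (2 ^ ℓ - 1) * (2 ^ ℓ + 1) = 2 ^ ℓ * (2 ^ ℓ + 1) - (2 ^ ℓ + 1) := by
      rw [Nat.sub_one_mul]
    have hd : 2 ^ ℓ * (2 ^ ℓ + 1) = 2 ^ ℓ * 2 ^ ℓ + 2 ^ ℓ := by ring
    have hle : 2 ^ ℓ ≤ 2 ^ (2 * ℓ) := Nat.pow_le_pow_right (by norm_num) (by omega)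
    omega
  rw [hprod] at hmul
  rw [Nat.gcd_comm (2 ^ n - 1) (2 ^ (2 * ℓ) - 1), gcd_two_pow_sub_one,
    Nat.gcd_comm (2 ^ n - 1) (2 ^ ℓ - 1), gcd_two_pow_sub_one,
    Nat.gcd_comm (2 * ℓ) n, Nat.gcd_comm ℓ n] at hmul
  have hpos : 0 < 2 ^ Nat.gcd n ℓ - 1 := by
    have : 0 < Nat.gcd n ℓ := Nat.gcd_pos_of_pos_right n hℓ
    have : (2:ℕ) ^ 1 ≤ 2 ^ Nat.gcd n ℓ := Nat.pow_le_pow_right (by norm_num) this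
    omega
  rw [hmul, Nat.mul_div_cancel_left _ hpos, Nat.gcd_comm]
end

section
/- Let p be an odd prime and let k ≥ 1. Set ℓ = k+1 and d = (p^ℓ + 1)/2. Then for every q = p^n and every α in F_q, writing u for a root in F_{q^2} of z^2 - 2αz + 1, one has (α+1)^d + (α-1)^d = 2·((u/2)^d + (u^{-1}/2)^d). In particular, (x+1)^d + (x-1)^d = 2·D_d(x, 1/4) as functions on F_q, where D_d(x,a) is the d-th Dickson polynomial of the first kind. -/
open Polynomial in
lemma dickson_eval_aux {R : Type*} [CommRing R] (a x y : R) (h : x * y = a) :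
    ∀ n, (dickson 1 a n).eval (x + y) = x ^ n + y ^ n
  | 0 => by simp [dickson_zero]; norm_num
  | 1 => by simp [dickson_one]
  | n + 2 => by
    simp only [dickson_add_two, eval_sub, eval_mul, eval_X, eval_C,
      dickson_eval_aux a x y h (n + 1), dickson_eval_aux a x y h n]
    subst h
    ring

lemma charP_of_card_pow {F : Type*} [Field F] [Fintype F] (p n : ℕ) (hp : p.Prime)
    (hn : 0 < n) (h : Fintype.card F = p ^ n) : CharP F p := by
  obtain ⟨m, hr, hcard⟩ := FiniteField.card F (ringChar F)
  have hdvd : p ∣ ringChar F ^ (m : ℕ) := by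
    rw [← hcard, h]; exact dvd_pow_self p hn.ne'
  have hpr : p = ringChar F :=
    (Nat.prime_dvd_prime_iff_eq hp hr).mp (hp.dvd_of_dvd_pow hdvd)
  rw [hpr]; exact ringChar.charP F

-- Key computation in an algebraically closed field of char p.
lemma key_calc (p k : ℕ) (hp : p.Prime) (hp2 : p ≠ 2)
    (L : Type*) [Field L] [IsAlgClosed L] [CharP L p]
    (a U : L) (hU : U ^ 2 - 2 * a * U + 1 = 0) :
    (a + 1) ^ ((p ^ (k + 1) + 1) / 2) + (a - 1) ^ ((p ^ (k + 1) + 1) / 2) =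
      2 * ((U / 2) ^ ((p ^ (k + 1) + 1) / 2) + (U⁻¹ / 2) ^ ((p ^ (k + 1) + 1) / 2)) := by
  haveI : Fact p.Prime := ⟨hp⟩
  have h2 : (2 : L) ≠ 0 := by
    intro h
    have := (CharP.cast_eq_zero_iff L p 2).mp (by exact_mod_cast h)
    exact hp2 ((Nat.prime_dvd_prime_iff_eq hp Nat.prime_two).mp this)
  set m := p ^ (k + 1) with hm
  have hmodd : Odd m := (hp.odd_of_ne_two hp2).pow
  set d := (m + 1) / 2 with hd
  have hd2 : m + 1 = 2 * d := by
    obtain ⟨t, ht⟩ := hmodd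
    omega
  have hU0 : U ≠ 0 := by rintro rfl; simp at hU
  obtain ⟨v, hv⟩ := IsAlgClosed.exists_pow_nat_eq U (n := 2) (by norm_num)
  have hv0 : v ≠ 0 := by rintro rfl; simp at hv; exact hU0 hv.symm
  have hUinv : U⁻¹ = (v⁻¹) ^ 2 := by rw [← hv, inv_pow]
  have hsum : U + U⁻¹ = 2 * a := by
    field_simp
    linear_combination hU
  have hplus : a + 1 = (v + v⁻¹) ^ 2 / 2 := by
    rw [eq_div_iff h2]
    have : (v + v⁻¹) ^ 2 = U + U⁻¹ + 2 := by
      rw [← hv]; field_simp; ring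
    rw [this, hsum]; ring
  have hminus : a - 1 = (v - v⁻¹) ^ 2 / 2 := by
    rw [eq_div_iff h2]
    have : (v - v⁻¹) ^ 2 = U + U⁻¹ - 2 := by
      rw [← hv]; field_simp; ring
    rw [this, hsum]; ring
  have frob₁ : (v + v⁻¹) ^ p ^ (k + 1) = v ^ p ^ (k + 1) + (v⁻¹) ^ p ^ (k + 1) :=
    add_pow_char_pow v v⁻¹ p (k + 1)
  have frob₂ : (v - v⁻¹) ^ p ^ (k + 1) = v ^ p ^ (k + 1) - (v⁻¹) ^ p ^ (k + 1) :=
    sub_pow_char_pow v v⁻¹ (k + 1)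
  have e1 : (a + 1) ^ d = (v ^ m + (v⁻¹) ^ m) * (v + v⁻¹) / 2 ^ d := by
    rw [hplus, div_pow, ← pow_mul, ← hd2, pow_succ, hm, frob₁]
  have e2 : (a - 1) ^ d = (v ^ m - (v⁻¹) ^ m) * (v - v⁻¹) / 2 ^ d := by
    rw [hminus, div_pow, ← pow_mul, ← hd2, pow_succ, hm, frob₂]
  have key : (v ^ m + (v⁻¹) ^ m) * (v + v⁻¹) + (v ^ m - (v⁻¹) ^ m) * (v - v⁻¹)
      = 2 * (v ^ (m + 1) + (v⁻¹) ^ (m + 1)) := by ring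
  have hvd : v ^ (m + 1) = U ^ d := by rw [hd2, pow_mul, hv]
  have hwd : (v⁻¹) ^ (m + 1) = (U⁻¹) ^ d := by rw [hd2, pow_mul, inv_pow, hv]
  rw [e1, e2, ← add_div, key, hvd, hwd, div_pow, div_pow]
  field_simp

theorem stmt_5 (p n k : ℕ) (hp : p.Prime) (hp2 : p ≠ 2) (hn : 0 < n) (hk : 1 ≤ k)
    (F K : Type) [Field F] [Fintype F] [Field K] [Fintype K] [Algebra F K]
    (hF : Fintype.card F = p ^ n) (hK : Fintype.card K = p ^ (2 * n)) :
    (∀ (α : F) (u : K), u ^ 2 - 2 * algebraMap F K α * u + 1 = 0 →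
        algebraMap F K ((α + 1) ^ ((p ^ (k + 1) + 1) / 2) + (α - 1) ^ ((p ^ (k + 1) + 1) / 2)) =
          2 * ((u / 2) ^ ((p ^ (k + 1) + 1) / 2) + (u⁻¹ / 2) ^ ((p ^ (k + 1) + 1) / 2))) ∧
      ∀ x : F, (x + 1) ^ ((p ^ (k + 1) + 1) / 2) + (x - 1) ^ ((p ^ (k + 1) + 1) / 2) =
        2 * Polynomial.eval x (Polynomial.dickson 1 (4⁻¹ : F) ((p ^ (k + 1) + 1) / 2)) := by
  haveI : Fact p.Prime := ⟨hp⟩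
  haveI hcharK : CharP K p := charP_of_card_pow p (2 * n) hp (by omega) hK
  haveI hcharF : CharP F p := charP_of_card_pow p n hp hn hF
  have h2K : (2 : K) ≠ 0 := by
    intro h
    have := (CharP.cast_eq_zero_iff K p 2).mp (by exact_mod_cast h)
    exact hp2 ((Nat.prime_dvd_prime_iff_eq hp Nat.prime_two).mp this)
  -- Part 1
  have part1 : ∀ (α : F) (u : K), u ^ 2 - 2 * algebraMap F K α * u + 1 = 0 →
      algebraMap F K ((α + 1) ^ ((p ^ (k + 1) + 1) / 2) + (α - 1) ^ ((p ^ (k + 1) + 1) / 2)) =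
        2 * ((u / 2) ^ ((p ^ (k + 1) + 1) / 2) + (u⁻¹ / 2) ^ ((p ^ (k + 1) + 1) / 2)) := by
    intro α u hu
    set L := AlgebraicClosure K
    haveI : CharP L p := charP_of_injective_algebraMap (algebraMap K L).injective p
    apply (algebraMap K L).injective
    have hu0 : u ≠ 0 := by rintro rfl; simp at hu
    set φ := algebraMap K L with hφ
    have hL : (φ u) ^ 2 - 2 * (φ (algebraMap F K α)) * (φ u) + 1 = 0 := by
      have := congrArg φ hu
      simpa only [map_add, map_sub, map_mul, map_pow, map_one, map_zero, map_ofNat] using this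
    have := key_calc p k hp hp2 L (φ (algebraMap F K α)) (φ u) hL
    calc φ (algebraMap F K ((α + 1) ^ ((p ^ (k + 1) + 1) / 2)
          + (α - 1) ^ ((p ^ (k + 1) + 1) / 2)))
        = (φ (algebraMap F K α) + 1) ^ ((p ^ (k + 1) + 1) / 2)
          + (φ (algebraMap F K α) - 1) ^ ((p ^ (k + 1) + 1) / 2) := by
          simp only [map_add, map_sub, map_pow, map_one]
      _ = 2 * ((φ u / 2) ^ ((p ^ (k + 1) + 1) / 2)
          + ((φ u)⁻¹ / 2) ^ ((p ^ (k + 1) + 1) / 2)) := this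
      _ = φ (2 * ((u / 2) ^ ((p ^ (k + 1) + 1) / 2) + (u⁻¹ / 2) ^ ((p ^ (k + 1) + 1) / 2))) := by
          simp only [map_add, map_mul, map_pow, map_div₀, map_inv₀, map_ofNat]
  refine ⟨part1, ?_⟩
  -- Part 2
  intro x
  have h4K : (4 : K) ≠ 0 := by
    intro h
    apply h2K
    have : (2 : K) * 2 = 0 := by rw [← h]; norm_num
    rcases mul_eq_zero.mp this with h | h <;> exact h
  -- every element of F is a square in K
  have hsq : IsSquare ((algebraMap F K) (x ^ 2 - 1)) := by
    by_cases hx : x ^ 2 - 1 = 0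
    · rw [hx, map_zero]; exact ⟨0, by simp⟩
    · have hb0 : (algebraMap F K) (x ^ 2 - 1) ≠ 0 := by
        simpa using (map_ne_zero (algebraMap F K)).mpr hx
      have hrc : ringChar K ≠ 2 := by
        rw [ringChar.eq K p]; exact hp2
      rw [FiniteField.isSquare_iff hrc hb0]
      have hq : Odd (p ^ n) := (hp.odd_of_ne_two hp2).pow
      have harith : Fintype.card K / 2 = (p ^ n - 1) * ((p ^ n + 1) / 2) := by
        rw [hK, two_mul, pow_add]
        obtain ⟨t, ht⟩ := hq
        rw [ht]
        have e1 : (2 * t + 1) * (2 * t + 1) = 4 * (t * t) + 4 * t + 1 := by ring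
        have e2 : (2 * t + 1 - 1) * ((2 * t + 1 + 1) / 2) = 2 * (t * t) + 2 * t := by
          have e3 : (2 * t + 1 + 1) / 2 = t + 1 := by omega
          have e4 : 2 * t + 1 - 1 = 2 * t := by omega
          rw [e3, e4]; ring
        rw [e1, e2]
        omega
      rw [harith, pow_mul, ← hF, ← map_pow,
        FiniteField.pow_card_sub_one_eq_one _ hx, map_one, one_pow]
  obtain ⟨s, hs⟩ := hsq
  have hs2 : s ^ 2 = (algebraMap F K x) ^ 2 - 1 := by
    rw [sq, ← hs, map_sub, map_one, map_pow]
  have hu : (algebraMap F K x + s) ^ 2 - 2 * algebraMap F K x * (algebraMap F K x + s) + 1 = 0 := by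
    linear_combination hs2
  set u : K := algebraMap F K x + s with hudef
  have hu0 : u ≠ 0 := by
    intro h; rw [h] at hu; simp at hu
  have h1 := part1 x u hu
  have hinv : u⁻¹ = 2 * algebraMap F K x - u :=
    inv_eq_of_mul_eq_one_right (by linear_combination -hu)
  have hsum : u / 2 + u⁻¹ / 2 = algebraMap F K x := by
    rw [hinv]; field_simp; ring
  have hprod : (u / 2) * (u⁻¹ / 2) = (4⁻¹ : K) := by
    rw [div_mul_div_comm, mul_inv_cancel₀ hu0]
    norm_num
  have hdick := dickson_eval_aux (4⁻¹ : K) (u / 2) (u⁻¹ / 2) hprod ((p ^ (k + 1) + 1) / 2)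
  rw [hsum] at hdick
  apply (algebraMap F K).injective
  rw [map_add, map_pow, map_pow, map_add, map_sub, map_one] at h1 ⊢
  rw [h1, map_mul, map_ofNat]
  congr 1
  rw [← hdick]
  have heval : (algebraMap F K)
        (Polynomial.eval x (Polynomial.dickson 1 (4⁻¹ : F) ((p ^ (k + 1) + 1) / 2)))
      = Polynomial.eval ((algebraMap F K) x)
        (Polynomial.map (algebraMap F K) (Polynomial.dickson 1 (4⁻¹ : F) ((p ^ (k + 1) + 1) / 2))) := by
    rw [Polynomial.eval_map, Polynomial.eval₂_at_apply]
  rw [heval, Polynomial.map_dickson, map_inv₀, map_ofNat]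
end

section
/- Let p > 3 be a prime and let d = a₀ with 4 ≤ a₀ ≤ p-1. If there exists ε in F_p* such that (x+1)^d + (x-1)^d = 2·D_d(x, ε) as polynomials over F_p, then a₀ = (p+1)/2. -/
open Polynomial

variable {R : Type*} [CommRing R]

lemma dickson_coeff_zero_of_lt (a : R) : ∀ n, ∀ m, n < m → (dickson 1 a n).coeff m = 0 := by
  intro n
  induction n using Nat.strong_induction_on with
  | _ n ih =>
    match n with
    | 0 =>
      intro m hm; rw [dickson_zero]
      obtain ⟨m, rfl⟩ : ∃ k, m = k + 1 := ⟨m - 1, by omega⟩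
      norm_num [coeff_ofNat_succ]
    | 1 =>
      intro m hm; rw [dickson_one, coeff_X]
      simp; omega
    | (n+2) =>
      intro m hm
      rw [dickson_add_two]
      obtain ⟨m, rfl⟩ : ∃ k, m = k + 1 := ⟨m - 1, by omega⟩
      rw [coeff_sub, coeff_X_mul, coeff_C_mul, ih (n+1) (by omega) m (by omega),
        ih n (by omega) (m+1) (by omega)]
      ring

private def Q (a : R) (n : ℕ) : Prop :=
  (dickson 1 a (n+1)).coeff (n+1) = 1 ∧
  (dickson 1 a (n+2)).coeff n = -((n : R)+2) * a ∧
  2 * (dickson 1 a (n+4)).coeff n = ((n : R)+4) * ((n : R)+1) * a^2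

lemma dickson_triple (a : R) : ∀ n, Q a n := by
  have h2 : dickson 1 a 2 = X ^ 2 - C a * 2 := by
    rw [show (2:ℕ) = 0 + 2 from rfl, dickson_add_two, dickson_zero, dickson_one]
    push_cast; try ring
  have h3 : dickson 1 a 3 = X ^ 3 - C a * 3 * X := by
    rw [show (3:ℕ) = 1 + 2 from rfl, dickson_add_two, h2, dickson_one]; try ring
  have h4 : dickson 1 a 4 = X ^ 4 - C a * 4 * X ^ 2 + C (a ^ 2) * 2 := by
    rw [show (4:ℕ) = 2 + 2 from rfl, dickson_add_two, h2, h3, C_pow]; try ring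
  have h5 : dickson 1 a 5 = X ^ 5 - C a * 5 * X ^ 3 + C (a ^ 2) * 5 * X := by
    rw [show (5:ℕ) = 3 + 2 from rfl, dickson_add_two, h3, h4, C_pow]; try ring
  have h2' : dickson 1 a 2 = C (-2*a) + X ^ 2 := by
    rw [h2]; simp [C_mul, C_neg, map_ofNat]; try ring
  have h3' : dickson 1 a 3 = C (-3*a) * X + X ^ 3 := by
    rw [h3]; simp [C_mul, C_neg, map_ofNat]; try ring
  have h4' : dickson 1 a 4 = C (2*a^2) + C (-4*a) * X ^ 2 + X ^ 4 := by
    rw [h4]; simp [C_mul, C_neg, map_ofNat]; try ring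
  have h5' : dickson 1 a 5 = C (5*a^2) * X + C (-5*a) * X ^ 3 + X ^ 5 := by
    rw [h5]; simp [C_mul, C_neg, map_ofNat]; try ring
  have q0 : Q a 0 := by
    refine ⟨by simp [dickson_one], ?_, ?_⟩
    · rw [h2']; simp [coeff_X_pow, mul_assoc, map_ofNat, -map_pow]; try ring
    · rw [h4']; simp [coeff_X_pow, mul_assoc, map_ofNat, -map_pow]; try ring
  have q1 : Q a 1 := by
    refine ⟨by rw [h2']; simp [coeff_X_pow], ?_, ?_⟩
    · rw [h3']; simp [coeff_X_pow, coeff_X, mul_assoc, map_ofNat, -map_pow]; try ring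
    · rw [h5']; simp [coeff_X_pow, coeff_X, mul_assoc, map_ofNat, -map_pow]; try ring
  have key : ∀ n, Q a n ∧ Q a (n+1) := by
    intro n
    induction n with
    | zero => exact ⟨q0, q1⟩
    | succ n ih =>
      obtain ⟨⟨hA, hB, hC⟩, hQ'⟩ := ih
      obtain ⟨hA', hB', hC'⟩ := hQ'
      refine ⟨⟨hA', hB', hC'⟩, ?_, ?_, ?_⟩
      · -- coeff (dickson (n+3)) (n+3) = 1
        show (dickson 1 a ((n+1)+2)).coeff ((n+2)+1) = 1
        rw [dickson_add_two, coeff_sub, coeff_X_mul, coeff_C_mul,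
          dickson_coeff_zero_of_lt a (n+1) ((n+2)+1) (by omega)]
        have hA1 : (dickson 1 a (n+1+1)).coeff (n+2) = 1 := hA'
        rw [hA1]; try ring
      · -- coeff (dickson (n+4)) (n+2) = -((n+2)+2) a
        show (dickson 1 a ((n+2)+2)).coeff ((n+1)+1) = -(((n+1+1:ℕ):R)+2) * a
        rw [dickson_add_two, coeff_sub, coeff_X_mul, coeff_C_mul]
        have hB1 : (dickson 1 a (n+2+1)).coeff (n+1) = -(((n+1:ℕ):R)+2) * a := hB'
        have hA1 : (dickson 1 a (n+2)).coeff ((n+1)+1) = 1 := hA'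
        rw [hB1, hA1]; push_cast; try ring
      · -- 2 coeff (dickson (n+6)) (n+2) = ((n+2)+4)((n+2)+1) a²
        show 2 * (dickson 1 a ((n+4)+2)).coeff ((n+1)+1)
            = (((n+1+1:ℕ):R)+4) * (((n+1+1:ℕ):R)+1) * a^2
        rw [dickson_add_two, coeff_sub, coeff_X_mul, coeff_C_mul]
        have hC1 : 2 * (dickson 1 a (n+4+1)).coeff (n+1) = (((n+1:ℕ):R)+4) * (((n+1:ℕ):R)+1) * a^2 := hC'
        have hB2 : (dickson 1 a (n+4)).coeff ((n+1)+1) = -(((n+1+1:ℕ):R)+2) * a := by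
          have : (dickson 1 a ((n+2)+2)).coeff ((n+1)+1) = -(((n+1+1:ℕ):R)+2) * a := by
            rw [dickson_add_two, coeff_sub, coeff_X_mul, coeff_C_mul]
            have hB1 : (dickson 1 a (n+2+1)).coeff (n+1) = -(((n+1:ℕ):R)+2) * a := hB'
            have hA1 : (dickson 1 a (n+2)).coeff ((n+1)+1) = 1 := hA'
            rw [hB1, hA1]; push_cast; try ring
          exact this
        push_cast at hC1 hB2 ⊢
        linear_combination hC1 - 2 * a * hB2
  exact fun n => (key n).1

theorem stmt_6 (p d : ℕ) (hp : p.Prime) (hp3 : 3 < p) (hd4 : 4 ≤ d) (hdp : d ≤ p - 1)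
    (ε : ZMod p) (hε : ε ≠ 0)
    (h : ((Polynomial.X + 1) ^ d + (Polynomial.X - 1) ^ d : Polynomial (ZMod p)) =
        2 * Polynomial.dickson 1 ε d) :
    d = (p + 1) / 2 := by
  obtain ⟨m, rfl⟩ : ∃ m, d = m + 4 := ⟨d - 4, by omega⟩
  haveI : Fact p.Prime := ⟨hp⟩
  have hpd : ∀ k : ℕ, 0 < k → k < p → ((k : ZMod p) ≠ 0) := by
    intro k hk1 hk2 hk0
    rw [ZMod.natCast_eq_zero_iff] at hk0
    have := Nat.le_of_dvd hk1 hk0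
    omega
  have hm4 : ((m+4 : ℕ) : ZMod p) ≠ 0 := hpd _ (by omega) (by omega)
  have hm3 : ((m+3 : ℕ) : ZMod p) ≠ 0 := hpd _ (by omega) (by omega)
  have hm1 : ((m+1 : ℕ) : ZMod p) ≠ 0 := hpd _ (by omega) (by omega)
  have hx : (X - 1 : (ZMod p)[X]) = X + C (-1) := by rw [map_neg, map_one]; ring
  have e1 : ((X+1:(ZMod p)[X])^(m+4)).coeff (m+2) + ((X-1:(ZMod p)[X])^(m+4)).coeff (m+2)
      = (2 * dickson 1 ε (m+4)).coeff (m+2) := by rw [← coeff_add, h]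
  have e2 : ((X+1:(ZMod p)[X])^(m+4)).coeff m + ((X-1:(ZMod p)[X])^(m+4)).coeff m
      = (2 * dickson 1 ε (m+4)).coeff m := by rw [← coeff_add, h]
  have d1 : (dickson 1 ε (m+4)).coeff (m+2) = -(((m+2:ℕ):ZMod p)+2) * ε :=
    (dickson_triple ε (m+2)).2.1
  have d2 : 2 * (dickson 1 ε (m+4)).coeff m = ((m:ZMod p)+4)*((m:ZMod p)+1)*ε^2 :=
    (dickson_triple ε m).2.2
  rw [hx, coeff_X_add_one_pow, coeff_X_add_C_pow,
    show m+4-(m+2) = 2 from by omega, coeff_ofNat_mul, d1] at e1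
  rw [hx, coeff_X_add_one_pow, coeff_X_add_C_pow,
    show m+4-m = 4 from by omega, coeff_ofNat_mul] at e2
  have e2' : ((m+4).choose m : ZMod p) + ((m+4).choose m : ZMod p)
      = ((m:ZMod p)+4)*((m:ZMod p)+1)*ε^2 := by
    push_cast at e2 ⊢
    linear_combination e2 + d2
  -- nat binomial identities
  have n1 : (m+4).choose (m+2) * 2 = (m+4)*(m+3) := by
    have hs : (m+4).choose (m+2) = (m+4).choose 2 := by
      rw [show m+2 = (m+4) - 2 from by omega, Nat.choose_symm (by omega)]
    rw [hs, Nat.choose_two_right, show m+4-1 = m+3 from by omega]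
    exact Nat.div_mul_cancel (even_iff_two_dvd.mp (by simpa [Nat.mul_comm] using Nat.even_mul_succ_self (m+3)))
  have n2 : (m+4).choose m * 24 = (m+4)*(m+3)*(m+2)*(m+1) := by
    have hs : (m+4).choose m = (m+4).choose 4 := by
      simpa using Nat.choose_symm (show 4 ≤ m+4 by omega)
    have hf := Nat.choose_mul_factorial_mul_factorial (show 4 ≤ m+4 by omega)
    rw [show m+4-4 = m from rfl] at hf
    have key : ((m+4).choose 4 * 24) * m.factorial = ((m+4)*(m+3)*(m+2)*(m+1)) * m.factorial := by
      calc ((m+4).choose 4 * 24) * m.factorial = (m+4).choose 4 * Nat.factorial 4 * m.factorial := by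
            norm_num [Nat.factorial]
        _ = (m+4).factorial := hf
        _ = ((m+4)*(m+3)*(m+2)*(m+1)) * m.factorial := by
            simp [Nat.factorial_succ]; ring
    rw [hs]
    exact Nat.eq_of_mul_eq_mul_right (Nat.factorial_pos m) key
  -- algebra in ZMod p
  have hm4' : ((m:ZMod p)+4) ≠ 0 := by push_cast at hm4; exact hm4
  have hm3' : ((m:ZMod p)+3) ≠ 0 := by push_cast at hm3; exact hm3
  have hm1' : ((m:ZMod p)+1) ≠ 0 := by push_cast at hm1; exact hm1
  have s : 2*ε + ((m:ZMod p)+3) = 0 := by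
    have cn1 : ((m+4).choose (m+2) * 2 : ℕ) = ((m+4)*(m+3) : ℕ) := n1
    have cc1 := congrArg (fun k : ℕ => (k : ZMod p)) cn1
    push_cast at cc1 e1
    have : ((m:ZMod p)+4) * (2*ε + ((m:ZMod p)+3)) = 0 := by
      linear_combination e1 - cc1
    rcases mul_eq_zero.mp this with h0 | h0
    · exact absurd h0 hm4'
    · exact h0
  have hε2 : 4 * ε^2 = ((m:ZMod p)+3)^2 := by linear_combination (2*ε - ((m:ZMod p)+3)) * s
  have g : ((m:ZMod p)+4)*((m:ZMod p)+3)*((m:ZMod p)+1)*(((m:ZMod p)+2) - 3*((m:ZMod p)+3)) = 0 := by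
    have cc2 := congrArg (fun k : ℕ => (k : ZMod p)) n2
    push_cast at cc2
    linear_combination -cc2 + 12 * e2' + 3*((m:ZMod p)+4)*((m:ZMod p)+1) * hε2
  have hz : ((m:ZMod p)+2) - 3*((m:ZMod p)+3) = 0 := by
    rcases mul_eq_zero.mp g with h0 | h0
    · rcases mul_eq_zero.mp h0 with h0 | h0
      · rcases mul_eq_zero.mp h0 with h0 | h0
        · exact absurd h0 hm4'
        · exact absurd h0 hm3'
      · exact absurd h0 hm1'
    · exact h0
  have hcast : ((2*m+7 : ℕ) : ZMod p) = 0 := by push_cast; linear_combination -hz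
  rw [ZMod.natCast_eq_zero_iff] at hcast
  obtain ⟨k, hk⟩ := hcast
  have hk1 : k = 1 := by
    rcases k with _ | _ | k
    · omega
    · rfl
    · exfalso
      have hmp : m + 5 ≤ p := by omega
      nlinarith [hk, hmp]
  subst hk1
  omega
end

section
/- Let p be an odd prime and n ≥ 2. The power map x ↦ x^{(p^ℓ+1)/2} is a permutation of F_{p^n} if and only if one of the following holds: (1) ℓ = 0; (2) ℓ is even and n is odd; (3) ℓ and n are both even and, writing n = 2^{t₁}·u and ℓ = 2^{t₂}·v with u, v odd, one has t₂ ≥ t₁; (4) ℓ is odd, n is odd, and p ≡ 1 (mod 4). -/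
lemma pow_bij_iff (F : Type) [Field F] [Fintype F] (e : ℕ) (he : e ≠ 0) :
    Function.Bijective (fun x : F => x ^ e) ↔ Nat.Coprime e (Fintype.card F - 1) := by
  have hcardu : Nat.card Fˣ = Fintype.card F - 1 := by
    rw [Nat.card_units, Nat.card_eq_fintype_card]
  constructor
  · intro hb
    by_contra hc
    obtain ⟨r, hr, hre, hrc⟩ := Nat.Prime.not_coprime_iff_dvd.mp hc
    have : Fact r.Prime := ⟨hr⟩
    obtain ⟨ζ, hζ⟩ := exists_prime_orderOf_dvd_card' (G := Fˣ) r (hcardu ▸ hrc)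
    have h1 : (ζ : F) ^ e = (1 : F) ^ e := by
      obtain ⟨c, rfl⟩ := hre
      rw [one_pow, pow_mul, ← Units.val_pow_eq_pow_val, ← hζ, pow_orderOf_eq_one]
      simp
    have h2 : (ζ : F) = 1 := hb.injective h1
    have : ζ = 1 := Units.ext h2
    rw [this, orderOf_one] at hζ
    exact hr.one_lt.ne' hζ.symm
  · intro hc
    have h2 : Nat.Coprime (Nat.card Fˣ) e := by rw [hcardu]; exact hc.symm
    refine Finite.injective_iff_bijective.mp ?_
    intro x y hxy
    simp only at hxy
    rcases eq_or_ne y 0 with rfl | hy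
    · rw [zero_pow he] at hxy
      exact pow_eq_zero_iff he |>.mp hxy
    · rcases eq_or_ne x 0 with rfl | hx
      · rw [zero_pow he] at hxy; exact absurd ((pow_eq_zero_iff he).mp hxy.symm) hy
      · have h3 := (powCoprime h2).injective (a₁ := Units.mk0 x hx) (a₂ := Units.mk0 y hy) ?_
        · have := congrArg Units.val h3
          simpa using this
        · ext
          simpa [powCoprime] using hxy

lemma pow_mod4_one (p ℓ : ℕ) (hp : p % 2 = 1) (h : Even ℓ ∨ p % 4 = 1) : p ^ ℓ % 4 = 1 := by
  rcases h with ⟨k, rfl⟩ | h1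
  · have hsq : p ^ 2 % 4 = 1 := by
      obtain ⟨c, hc⟩ : ∃ c, p = 2 * c + 1 := ⟨p / 2, by omega⟩
      have : p ^ 2 = 4 * (c * c + c) + 1 := by subst hc; ring
      omega
    rw [show k + k = 2 * k by ring, pow_mul, Nat.pow_mod, hsq]
    simp [Nat.pow_mod]
  · rw [Nat.pow_mod, h1]; simp [Nat.pow_mod]

lemma pow_mod4_three (p ℓ : ℕ) (h3 : p % 4 = 3) (hℓ : Odd ℓ) : p ^ ℓ % 4 = 3 := by
  obtain ⟨k, rfl⟩ := hℓ
  have he : p ^ (2 * k) % 4 = 1 := pow_mod4_one p (2 * k) (by omega) (Or.inl ⟨k, by ring⟩)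
  rw [pow_succ, Nat.mul_mod, he, h3]

lemma v2_mul_odd (t u : ℕ) (hu : Odd u) : (2 ^ t * u).factorization 2 = t := by
  have hu0 : u ≠ 0 := by rintro rfl; simp at hu
  rw [Nat.factorization_mul (by positivity) hu0]
  simp [Nat.Prime.factorization_pow, Nat.factorization_eq_zero_of_not_dvd (by
    rwa [Nat.odd_iff, ← Nat.two_dvd_ne_zero] at hu), Nat.Prime.factorization, Finsupp.single_eq_same, Nat.Prime.factorization_self Nat.prime_two]

lemma key_order (p ℓ n r : ℕ) (hp : 2 ≤ p) (hn : n ≠ 0) (hr : r.Prime) (hr2 : r ≠ 2)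
    (h1 : r ∣ p ^ ℓ + 1) (h2 : r ∣ p ^ n - 1)
    (hv : n.factorization 2 ≤ ℓ.factorization 2) : False := by
  haveI : Fact r.Prime := ⟨hr⟩
  have hpn1 : 1 ≤ p ^ n := Nat.one_le_pow _ _ (by omega)
  have hpl : (p : ZMod r) ^ ℓ = -1 := by
    have : ((p ^ ℓ + 1 : ℕ) : ZMod r) = 0 := by
      exact_mod_cast (ZMod.natCast_eq_zero_iff _ _).mpr h1
    push_cast at this
    linear_combination this
  have hpn : (p : ZMod r) ^ n = 1 := by
    have hmod : p ^ n ≡ 1 [MOD r] := ((Nat.modEq_iff_dvd' hpn1).mpr h2).symm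
    have := (ZMod.natCast_eq_natCast_iff _ _ _).mpr hmod.symm
    push_cast at this
    exact this.symm
  set k := orderOf ((p : ZMod r)) with hk
  have hkn : k ∣ n := orderOf_dvd_of_pow_eq_one hpn
  have hk2l : k ∣ 2 * ℓ := by
    apply orderOf_dvd_of_pow_eq_one
    rw [mul_comm, pow_mul, hpl]
    ring
  have hknl : ¬ k ∣ ℓ := by
    intro h
    have h1' : (p : ZMod r) ^ ℓ = 1 := orderOf_dvd_iff_pow_eq_one.mp h
    rw [hpl] at h1'
    have : ((2 : ℕ) : ZMod r) = 0 := by push_cast; linear_combination -h1'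
    have hrd := (ZMod.natCast_eq_zero_iff _ _).mp this
    have := (Nat.prime_dvd_prime_iff_eq hr Nat.prime_two).mp hrd
    exact hr2 this
  have hk0 : k ≠ 0 := by rintro h; rw [h] at hkn; exact hn (zero_dvd_iff.mp hkn)
  set a := k.factorization 2 with ha
  set m := k / 2 ^ a with hm
  have hkeq : 2 ^ a * m = k := Nat.ordProj_mul_ordCompl_eq_self k 2
  have hmodd : ¬ 2 ∣ m := Nat.not_dvd_ordCompl Nat.prime_two hk0
  have hcop : Nat.Coprime 2 m := (Nat.Prime.coprime_iff_not_dvd Nat.prime_two).mpr hmodd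
  have hav : a ≤ n.factorization 2 := by
    have := (Nat.factorization_le_iff_dvd hk0 hn).mpr hkn
    exact this 2
  have h2a : 2 ^ a ∣ ℓ := dvd_trans (pow_dvd_pow 2 (hav.trans hv)) (Nat.ordProj_dvd ℓ 2)
  have hml : m ∣ ℓ := by
    have hmk : m ∣ k := Nat.ordCompl_dvd k 2
    have : m ∣ 2 * ℓ := hmk.trans hk2l
    exact (Nat.Coprime.dvd_of_dvd_mul_left hcop.symm this)
  exact hknl (hkeq ▸ Nat.Coprime.mul_dvd_of_dvd_of_dvd (hcop.pow_left a) h2a hml)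
lemma sq_sub_one_fac (A : ℕ) (hA : 1 ≤ A) : (A + 1) * (A - 1) + 1 = A * A := by
  obtain ⟨B, rfl⟩ := Nat.exists_eq_add_of_le hA
  have h1 : 1 + B - 1 = B := by omega
  rw [h1]; ring

lemma v2_one_le_of_two_dvd {c : ℕ} (hc : c ≠ 0) (h : 2 ∣ c) : 1 ≤ c.factorization 2 := by
  rw [← Nat.Prime.pow_dvd_iff_le_factorization Nat.prime_two hc]
  simpa using h

lemma two_dvd_of_v2_one_le {c : ℕ} (hc : c ≠ 0) (h : 1 ≤ c.factorization 2) : 2 ∣ c := by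
  have := (Nat.Prime.pow_dvd_iff_le_factorization Nat.prime_two hc).mpr h
  simpa using this

lemma witness (p ℓ n : ℕ) (hp : 3 ≤ p) (hpo : p % 2 = 1) (hℓ : ℓ ≠ 0) (hn : n ≠ 0)
    (hfirst : Even ℓ ∨ p % 4 = 1) (hv : ℓ.factorization 2 < n.factorization 2) :
    ¬ Nat.Coprime ((p ^ ℓ + 1) / 2) (p ^ n - 1) := by
  set d := Nat.gcd ℓ n with hd
  have hd0 : d ≠ 0 := Nat.gcd_ne_zero_left hℓ
  have hvd : d.factorization 2 = ℓ.factorization 2 := by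
    rw [hd, Nat.factorization_gcd hℓ hn]
    simp [min_eq_left hv.le]
  have hpd4 : p ^ d % 4 = 1 := by
    apply pow_mod4_one p d hpo
    rcases hfirst with he | h1
    · left
      have h1 : 1 ≤ d.factorization 2 := hvd ▸ v2_one_le_of_two_dvd hℓ he.two_dvd
      obtain ⟨c, hc⟩ := two_dvd_of_v2_one_le hd0 h1
      exact ⟨c, by omega⟩
    · right; exact h1
  set m := (p ^ d + 1) / 2 with hm
  have hm2 : 2 * m = p ^ d + 1 := by omega
  have hmodd : ¬ 2 ∣ m := by omega
  have hcop2 : Nat.Coprime 2 m := (Nat.Prime.coprime_iff_not_dvd Nat.prime_two).mpr hmodd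
  have hm_ge : 2 ≤ m := by
    have : p ^ 1 ≤ p ^ d := Nat.pow_le_pow_right (by omega) (by omega)
    simp only [pow_one] at this
    omega
  -- m divides (p^ℓ+1)/2
  set c := ℓ / d with hc
  have hdc : ℓ = d * c := by rw [hc, Nat.mul_div_cancel' (Nat.gcd_dvd_left ℓ n)]
  have hc0 : c ≠ 0 := by rintro h; rw [h, mul_zero] at hdc; exact hℓ hdc
  have hcodd : Odd c := by
    rw [Nat.odd_iff]
    have hvc : c.factorization 2 = 0 := by
      rw [hc, Nat.factorization_div (Nat.gcd_dvd_left ℓ n)]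
      simp [← hd, hvd]
    by_contra h
    have : 2 ∣ c := by omega
    have := v2_one_le_of_two_dvd hc0 this
    omega
  have hdvd1 : p ^ d + 1 ∣ p ^ ℓ + 1 := by
    have := Odd.nat_add_dvd_pow_add_pow (p ^ d) 1 hcodd
    rwa [one_pow, ← pow_mul, ← hdc] at this
  have hmd : m ∣ p ^ d + 1 := ⟨2, by omega⟩
  have hme : m ∣ (p ^ ℓ + 1) / 2 := by
    have h1 : m ∣ p ^ ℓ + 1 := hmd.trans hdvd1
    have h2 : p ^ ℓ + 1 = 2 * ((p ^ ℓ + 1) / 2) := by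
      have : p ^ ℓ % 2 = 1 := by simp [Nat.pow_mod, hpo]
      omega
    rw [h2] at h1
    exact Nat.Coprime.dvd_of_dvd_mul_left hcop2.symm h1
  -- m divides p^n - 1
  set s := n / d with hs
  have hds : n = d * s := by rw [hs, Nat.mul_div_cancel' (Nat.gcd_dvd_right ℓ n)]
  have hs0 : s ≠ 0 := by rintro h; rw [h, mul_zero] at hds; exact hn hds
  have hsev : 2 ∣ s := by
    apply two_dvd_of_v2_one_le hs0
    rw [hs, Nat.factorization_div (Nat.gcd_dvd_right ℓ n)]
    simp only [Finsupp.tsub_apply, ← hd]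
    omega
  obtain ⟨s', hs'⟩ := hsev
  have hmn : m ∣ p ^ n - 1 := by
    have h1 : p ^ d + 1 ∣ p ^ (2 * d) - 1 := by
      have hA : 1 ≤ p ^ d := Nat.one_le_pow _ _ (by omega)
      have := sq_sub_one_fac (p ^ d) hA
      have heq : p ^ (2 * d) = p ^ d * p ^ d := by rw [two_mul, pow_add]
      exact ⟨p ^ d - 1, by omega⟩
    have h2 : p ^ (2 * d) - 1 ∣ p ^ n - 1 := by
      have := Nat.sub_dvd_pow_sub_pow (p ^ (2 * d)) 1 s'
      rwa [one_pow, ← pow_mul, show 2 * d * s' = n by rw [hds, hs']; ring] at this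
    exact hmd.trans (h1.trans h2)
  intro hco
  have hdg := Nat.dvd_gcd hme hmn
  rw [Nat.Coprime] at hco
  rw [hco] at hdg
  have := Nat.le_of_dvd one_pos hdg
  omega
theorem stmt_7 (p ℓ n : ℕ) (hp : p.Prime) (hp2 : p ≠ 2) (hn : 2 ≤ n) (hℓn : ℓ < n)
    (F : Type) [Field F] [Fintype F] (hF : Fintype.card F = p ^ n) :
    (Function.Bijective fun x : F => x ^ ((p ^ ℓ + 1) / 2)) ↔
      (ℓ = 0 ∨ (Even ℓ ∧ Odd n) ∨
        (Even ℓ ∧ Even n ∧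
          ∀ t₁ u t₂ v : ℕ, Odd u → Odd v → n = 2 ^ t₁ * u → ℓ = 2 ^ t₂ * v → t₁ ≤ t₂) ∨
        (Odd ℓ ∧ Odd n ∧ p % 4 = 1)) := by
  have hp3 : 3 ≤ p := by have := hp.two_le; omega
  have hpo : p % 2 = 1 := Nat.odd_iff.mp (hp.odd_of_ne_two hp2)
  have hplo : p ^ ℓ % 2 = 1 := by simp [Nat.pow_mod, hpo]
  have hpno : p ^ n % 2 = 1 := by simp [Nat.pow_mod, hpo]
  have hpn1 : 1 ≤ p ^ n := Nat.one_le_pow _ _ (by omega)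
  have he0 : (p ^ ℓ + 1) / 2 ≠ 0 := by omega
  have hn0 : n ≠ 0 := by omega
  rw [pow_bij_iff F _ he0, hF]
  by_cases hl0 : ℓ = 0
  · subst hl0
    simp only [pow_zero]
    norm_num
  have hedvd : (p ^ ℓ + 1) / 2 ∣ p ^ ℓ + 1 := ⟨2, by omega⟩
  constructor
  · intro hco
    have hA : Even ℓ ∨ p % 4 = 1 := by
      by_contra h
      push_neg at h
      obtain ⟨h1, h2⟩ := h
      have hlodd : Odd ℓ := Nat.odd_iff.mpr (by rw [Nat.even_iff] at h1; omega)
      have hp4 : p % 4 = 3 := by omega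
      have h3 : p ^ ℓ % 4 = 3 := pow_mod4_three p ℓ hp4 hlodd
      have hd2 : 2 ∣ (p ^ ℓ + 1) / 2 := by omega
      have hd2' : 2 ∣ p ^ n - 1 := by omega
      have := Nat.dvd_gcd hd2 hd2'
      rw [Nat.Coprime] at hco
      rw [hco] at this
      omega
    have hB : n.factorization 2 ≤ ℓ.factorization 2 := by
      by_contra h
      push_neg at h
      exact witness p ℓ n hp3 hpo hl0 hn0 hA h hco
    by_cases hne : Even n
    · have hle : Even ℓ := by
        by_contra h
        have hlodd : Odd ℓ := Nat.not_even_iff_odd.mp h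
        have hv0 : ℓ.factorization 2 = 0 :=
          Nat.factorization_eq_zero_of_not_dvd (by rw [Nat.odd_iff] at hlodd; omega)
        have : 1 ≤ n.factorization 2 := v2_one_le_of_two_dvd hn0 hne.two_dvd
        omega
      right; right; left
      refine ⟨hle, hne, ?_⟩
      intro t₁ u t₂ v hu hv hn' hl'
      have h1 : n.factorization 2 = t₁ := by rw [hn', v2_mul_odd _ _ hu]
      have h2 : ℓ.factorization 2 = t₂ := by rw [hl', v2_mul_odd _ _ hv]
      omega
    · have hnodd : Odd n := Nat.not_even_iff_odd.mp hne
      by_cases hle : Even ℓ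
      · right; left; exact ⟨hle, hnodd⟩
      · right; right; right
        exact ⟨Nat.not_even_iff_odd.mp hle, hnodd, hA.resolve_left hle⟩
  · intro hrhs
    have hAB : (Even ℓ ∨ p % 4 = 1) ∧ n.factorization 2 ≤ ℓ.factorization 2 := by
      rcases hrhs with h | ⟨hle, hno⟩ | ⟨hle, hne, hall⟩ | ⟨hlo, hno, hp4⟩
      · exact absurd h hl0
      · refine ⟨Or.inl hle, ?_⟩
        rw [Nat.factorization_eq_zero_of_not_dvd (by rw [Nat.odd_iff] at hno; omega)]
        exact Nat.zero_le _
      · refine ⟨Or.inl hle, ?_⟩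
        have hnd := Nat.ordProj_mul_ordCompl_eq_self n 2
        have hld := Nat.ordProj_mul_ordCompl_eq_self ℓ 2
        have hnu : Odd (ordCompl[2] n) := Nat.odd_iff.mpr (by
          have := Nat.not_dvd_ordCompl Nat.prime_two hn0; omega)
        have hlu : Odd (ordCompl[2] ℓ) := Nat.odd_iff.mpr (by
          have := Nat.not_dvd_ordCompl Nat.prime_two hl0; omega)
        exact hall _ _ _ _ hnu hlu hnd.symm hld.symm
      · refine ⟨Or.inr hp4, ?_⟩
        rw [Nat.factorization_eq_zero_of_not_dvd (by rw [Nat.odd_iff] at hno; omega)]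
        exact Nat.zero_le _
    obtain ⟨hA, hB⟩ := hAB
    have h4 : p ^ ℓ % 4 = 1 := pow_mod4_one p ℓ hpo hA
    have heodd : ¬ 2 ∣ (p ^ ℓ + 1) / 2 := by omega
    by_contra hc
    obtain ⟨r, hr, hre, hrn⟩ := Nat.Prime.not_coprime_iff_dvd.mp hc
    have hr2 : r ≠ 2 := by rintro rfl; exact heodd hre
    exact key_order p ℓ n r (by omega) hn0 hr hr2 (hre.trans hedvd) hrn hB
end

section
/- Let p be an odd prime with p ≡ 1 (mod 4), and let ℓ, n both be odd with 1 ≤ ℓ < n. Then the power map x ↦ x^{(p^ℓ+1)/2} is not perfect (-1)-nonlinear over F_{p^n}; that is, there exists a in F_{p^n} such that x ↦ (x+a)^{(p^ℓ+1)/2} + x^{(p^ℓ+1)/2} is not a permutation of F_{p^n}. -/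
theorem stmt_8 (p ℓ n : ℕ) (hp : p.Prime) (hp4 : p % 4 = 1) (hℓ : 1 ≤ ℓ) (hℓn : ℓ < n)
    (hℓodd : Odd ℓ) (hnodd : Odd n)
    (F : Type) [Field F] [Fintype F] (hF : Fintype.card F = p ^ n) :
    ∃ a : F, ¬ Function.Bijective fun x : F =>
      (x + a) ^ ((p ^ ℓ + 1) / 2) + x ^ ((p ^ ℓ + 1) / 2) := by
  classical
  haveI : Fact p.Prime := ⟨hp⟩
  have hp2 : 2 ≤ p := hp.two_le
  have hp5 : 5 ≤ p := by omega
  haveI : NeZero p := ⟨by omega⟩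
  -- characteristic of F is p
  haveI hrc : CharP F (ringChar F) := ringChar.charP F
  have hchar : CharP F p := by
    obtain ⟨m, hr, hcard⟩ := FiniteField.card F (ringChar F)
    have hdvd : ringChar F ∣ p ^ n := by
      rw [← hF, hcard]
      exact dvd_pow_self _ (by exact_mod_cast m.ne_zero)
    have : ringChar F = p :=
      (Nat.prime_dvd_prime_iff_eq hr hp).mp (hr.dvd_of_dvd_pow hdvd)
    exact ringChar.of_eq this
  haveI := hchar
  -- ZMod p facts
  have hK2 : ringChar (ZMod p) ≠ 2 := by rw [ZMod.ringChar_zmod_n]; omega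
  obtain ⟨c, hc⟩ := FiniteField.exists_nonsquare (F := ZMod p) hK2
  have hex : ∃ k : ℕ, ¬ IsSquare ((k : ℕ) : ZMod p) :=
    ⟨c.val, by rwa [ZMod.natCast_zmod_val]⟩
  set u := Nat.find hex with hu_def
  have hu_ns : ¬ IsSquare ((u : ℕ) : ZMod p) := Nat.find_spec hex
  have hu0' : u ≠ 0 := by
    intro h
    exact hu_ns (by rw [h]; simpa using (isSquare_zero : IsSquare (0 : ZMod p)))
  have hu1' : u ≠ 1 := by
    intro h
    exact hu_ns (by rw [h]; simpa using (isSquare_one : IsSquare (1 : ZMod p)))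
  have hu2 : 2 ≤ u := by omega
  have hub : u ≤ c.val := Nat.find_le (by rwa [ZMod.natCast_zmod_val])
  have hup : u < p := lt_of_le_of_lt hub (ZMod.val_lt c)
  have hprev : IsSquare (((u - 1 : ℕ)) : ZMod p) :=
    not_not.mp (Nat.find_min hex (by omega))
  have hu0 : ((u : ℕ) : ZMod p) ≠ 0 := by
    rw [Ne, ZMod.natCast_eq_zero_iff]
    intro hd
    exact absurd (Nat.le_of_dvd (by omega) hd) (by omega)
  have hu1 : (((u - 1 : ℕ)) : ZMod p) ≠ 0 := by
    rw [Ne, ZMod.natCast_eq_zero_iff]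
    intro hd
    exact absurd (Nat.le_of_dvd (by omega) hd) (by omega)
  have hneg1 : IsSquare (-1 : ZMod p) := ZMod.exists_sq_eq_neg_one_iff.mpr (by omega)
  set y : ZMod p := -((u : ℕ) : ZMod p) with hy_def
  have hy0 : y ≠ 0 := neg_ne_zero.mpr hu0
  have hy_ns : ¬ IsSquare y := by
    intro hs
    have := hneg1.mul hs
    rw [hy_def] at this
    exact hu_ns (by simpa using this)
  have hy1 : y + 1 = -(((u - 1 : ℕ)) : ZMod p) := by
    rw [hy_def, Nat.cast_sub (by omega), Nat.cast_one]
    ring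
  have hy1sq : IsSquare (y + 1) := by
    rw [hy1, ← neg_one_mul]
    exact hneg1.mul hprev
  have hy1ne : y + 1 ≠ 0 := by rw [hy1]; exact neg_ne_zero.mpr hu1
  -- Euler criterion facts
  have hcardZ : Fintype.card (ZMod p) = p := ZMod.card p
  have hsq_pow : (y + 1) ^ (p / 2) = 1 := by
    have := (FiniteField.isSquare_iff hK2 hy1ne).mp hy1sq
    rwa [hcardZ] at this
  have hns_pow : y ^ (p / 2) = -1 := by
    rcases FiniteField.pow_dichotomy hK2 hy0 with h | h
    · exact absurd ((FiniteField.isSquare_iff hK2 hy0).mpr h) hy_ns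
    · rwa [hcardZ] at h
  -- arithmetic on exponents
  set T := ∑ i ∈ Finset.range ℓ, p ^ i with hT_def
  have geom : ∀ m : ℕ, (p - 1) * (∑ i ∈ Finset.range m, p ^ i) + 1 = p ^ m := by
    intro m
    induction m with
    | zero => simp
    | succ k ih =>
      rw [Finset.sum_range_succ, Nat.mul_add, pow_succ]
      have h1 : (p - 1) * p ^ k = p * p ^ k - p ^ k := Nat.sub_one_mul p (p ^ k)
      have h2 : p ^ k ≤ p * p ^ k := Nat.le_mul_of_pos_left _ (by omega)
      have h3 : p ^ k * p = p * p ^ k := Nat.mul_comm _ _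
      omega
  have todd : ∀ m : ℕ, (∑ i ∈ Finset.range m, p ^ i) % 2 = m % 2 := by
    intro m
    induction m with
    | zero => simp
    | succ k ih =>
      rw [Finset.sum_range_succ]
      have : p ^ k % 2 = 1 := Nat.odd_iff.mp (Odd.pow (Nat.odd_iff.mpr (by omega)))
      omega
  have hTodd : Odd T := by
    rw [Nat.odd_iff, hT_def, todd ℓ, ← Nat.odd_iff]; exact hℓodd
  have hgeom := geom ℓ
  have hp1 : p - 1 = 2 * (p / 2) := by omega
  have heq : p ^ ℓ + 1 = 2 * ((p / 2) * T + 1) := by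
    rw [← hgeom, hp1]; ring
  have hd : (p ^ ℓ + 1) / 2 = (p / 2) * T + 1 := by omega
  -- power computations in ZMod p
  have hyd : y ^ ((p ^ ℓ + 1) / 2) = -y := by
    rw [hd, pow_succ, pow_mul, hns_pow, Odd.neg_one_pow hTodd, neg_one_mul]
  have hy1d : (y + 1) ^ ((p ^ ℓ + 1) / 2) = y + 1 := by
    rw [hd, pow_succ, pow_mul, hsq_pow, one_pow, one_mul]
  -- transfer to F
  let φ : ZMod p →+* F := ZMod.castHom (dvd_refl p) F
  have hφinj : Function.Injective φ := φ.injective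
  refine ⟨1, fun hbij => ?_⟩
  have hinj := hbij.injective
  have hdpos : (p ^ ℓ + 1) / 2 ≠ 0 := by
    have : 2 ≤ p ^ ℓ + 1 := by
      have : 1 ≤ p ^ ℓ := Nat.one_le_pow _ _ (by omega)
      omega
    omega
  have hval : (φ y + 1) ^ ((p ^ ℓ + 1) / 2) + (φ y) ^ ((p ^ ℓ + 1) / 2) =
      (0 + 1 : F) ^ ((p ^ ℓ + 1) / 2) + (0 : F) ^ ((p ^ ℓ + 1) / 2) := by
    have h1 : φ y + 1 = φ (y + 1) := by rw [map_add, map_one]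
    rw [h1, ← map_pow, ← map_pow, hyd, hy1d, map_neg, zero_add, one_pow,
      zero_pow hdpos, add_zero, ← map_neg, ← map_add, ← map_one φ]
    congr 1
    ring
  have h2 : φ y = 0 := hinj hval
  exact hy0 (hφinj (h2.trans (map_zero φ).symm))
end

section
/- Let p be an odd prime, n ≥ 2, and 0 ≤ ℓ < n. The power map x ↦ x^{(p^ℓ+1)/2} is perfect (-1)-nonlinear over F_{p^n} if and only if one of the following holds: (1) ℓ = 0; (2) ℓ is even and n is odd; (3) ℓ and n are both even and, writing n = 2^{t₁}·u and ℓ = 2^{t₂}·v with u, v odd, one has t₂ ≥ t₁ + 1. -/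
private lemma pow_gcd_one {K : Type*} [Monoid K] {z : K} {a b : ℕ}
    (ha : z ^ a = 1) (hb : z ^ b = 1) (h : Nat.gcd a b = 1) : z = 1 := by
  rw [← orderOf_eq_one_iff]
  have h1 : orderOf z ∣ Nat.gcd a b :=
    Nat.dvd_gcd (orderOf_dvd_of_pow_eq_one ha) (orderOf_dvd_of_pow_eq_one hb)
  rw [h] at h1
  exact Nat.dvd_one.mp h1

private lemma key_id {K : Type*} [Field K] (p : ℕ) [Fact p.Prime] [CharP K p]
    (ℓ d : ℕ) (h2d : 2 * d = p ^ ℓ + 1) {s t w : K} (hst : s * t = 1)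
    (hw : 2 * w = s ^ 2 + t ^ 2) :
    2 ^ d * ((w + 1) ^ d + (w - 1) ^ d) = 2 * ((s ^ 2) ^ d + (t ^ 2) ^ d) := by
  have e1 : 2 * (w + 1) = (s + t) ^ 2 := by linear_combination hw - 2 * hst
  have e2 : 2 * (w - 1) = (s - t) ^ 2 := by linear_combination hw + 2 * hst
  have hfr1 : (s + t) ^ (p ^ ℓ) = s ^ (p ^ ℓ) + t ^ (p ^ ℓ) := add_pow_char_pow s t p ℓ
  have hfr2 : (s - t) ^ (p ^ ℓ) = s ^ (p ^ ℓ) - t ^ (p ^ ℓ) := sub_pow_char_pow s t ℓ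
  have c1 : ∀ x : K, x ^ (2 * d) = x ^ (p ^ ℓ) * x := by
    intro x; rw [h2d, pow_succ]
  calc 2 ^ d * ((w + 1) ^ d + (w - 1) ^ d)
      = (2 * (w + 1)) ^ d + (2 * (w - 1)) ^ d := by rw [mul_pow, mul_pow]; ring
    _ = (s + t) ^ (2 * d) + (s - t) ^ (2 * d) := by rw [e1, e2, pow_mul, pow_mul]
    _ = (s ^ (p ^ ℓ) + t ^ (p ^ ℓ)) * (s + t) + (s ^ (p ^ ℓ) - t ^ (p ^ ℓ)) * (s - t) := by
        rw [c1, hfr1, c1, hfr2]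
    _ = 2 * (s ^ (p ^ ℓ) * s + t ^ (p ^ ℓ) * t) := by ring
    _ = 2 * (s ^ (2 * d) + t ^ (2 * d)) := by rw [c1 s, c1 t]
    _ = 2 * ((s ^ 2) ^ d + (t ^ 2) ^ d) := by rw [pow_mul, pow_mul]

open Polynomial in
private lemma mem_range_algebraMap {F K : Type*} [Field F] [Fintype F] [Field K] [Algebra F K]
    {x : K} (hx : x ^ (Fintype.card F) = x) : ∃ y : F, algebraMap F K y = x := by
  by_contra hcon
  push_neg at hcon
  classical
  set q := Fintype.card F with hq
  have hq2 : 2 ≤ q := Fintype.one_lt_card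
  set f : K[X] := X ^ q - X with hf
  have hdeg : f.natDegree = q := by
    rw [hf]
    have h1 : (X : K[X]).natDegree < (X ^ q : K[X]).natDegree := by
      simp only [natDegree_X_pow, natDegree_X]
      omega
    rw [Polynomial.natDegree_sub_eq_left_of_natDegree_lt h1, natDegree_X_pow]
  have hf0 : f ≠ 0 := by
    intro h; rw [h] at hdeg; simp at hdeg; omega
  have hroot : ∀ y : K, y ^ q = y → y ∈ f.roots.toFinset := by
    intro y hy
    rw [Multiset.mem_toFinset, Polynomial.mem_roots hf0]
    simp [hf, Polynomial.IsRoot, hy]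
  set s : Finset K := insert x ((Finset.univ : Finset F).image (algebraMap F K)) with hs
  have hcard : s.card = q + 1 := by
    rw [hs, Finset.card_insert_of_notMem, Finset.card_image_of_injective _
      (algebraMap F K).injective, Finset.card_univ]
    intro hmem
    obtain ⟨y, _, hy⟩ := Finset.mem_image.mp hmem
    exact hcon y hy
  have hsub : s ⊆ f.roots.toFinset := by
    intro y hy
    rw [hs, Finset.mem_insert] at hy
    rcases hy with rfl | hy
    · exact hroot y hx
    · obtain ⟨z, _, rfl⟩ := Finset.mem_image.mp hy
      apply hroot
      rw [← map_pow, FiniteField.pow_card]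
  have h1 := Finset.card_le_card hsub
  have h2 := (f.roots.toFinset_card_le).trans (Polynomial.card_roots' f)
  omega


private lemma nu2_unique {m t u : ℕ} (hu : Odd u) (hm : m = 2 ^ t * u) (hm0 : m ≠ 0) :
    m.factorization 2 = t := by
  have hu0 : u ≠ 0 := by rintro rfl; simp at hm; omega
  have h2u : ¬ (2 ∣ u) := by
    rintro ⟨c, rfl⟩; exact (Nat.not_even_iff_odd.mpr hu) ⟨c, by ring⟩
  have := Nat.factorization_mul (a := 2 ^ t) (b := u) (pow_ne_zero _ two_ne_zero) hu0
  rw [hm, this]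
  simp [Nat.factorization_eq_zero_of_not_dvd h2u,
    Nat.Prime.factorization_self Nat.prime_two]

private lemma fact2_pos {m : ℕ} (hm : Even m) (hm0 : m ≠ 0) : 1 ≤ m.factorization 2 :=
  (Nat.Prime.factorization_pos_of_dvd Nat.prime_two hm0 (even_iff_two_dvd.mp hm))

private lemma rhs_iff (ℓ n : ℕ) (hn : 2 ≤ n) :
    (ℓ = 0 ∨ (Even ℓ ∧ Odd n) ∨
        (Even ℓ ∧ Even n ∧
          ∀ t₁ u t₂ v : ℕ, Odd u → Odd v → n = 2 ^ t₁ * u → ℓ = 2 ^ t₂ * v → t₁ + 1 ≤ t₂)) ↔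
      (ℓ = 0 ∨ n.factorization 2 < ℓ.factorization 2) := by
  have hn0 : n ≠ 0 := by omega
  have hdecomp : ∀ m : ℕ, m ≠ 0 → m = 2 ^ m.factorization 2 * (m / 2 ^ m.factorization 2) ∧
      Odd (m / 2 ^ m.factorization 2) := by
    intro m hm
    refine ⟨(Nat.ordProj_mul_ordCompl_eq_self m 2).symm, ?_⟩
    rw [← Nat.not_even_iff_odd, even_iff_two_dvd]
    exact Nat.not_dvd_ordCompl Nat.prime_two hm
  constructor
  · rintro (h | ⟨hl, hodd⟩ | ⟨hl, hev, h3⟩)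
    · exact Or.inl h
    · by_cases hl0 : ℓ = 0
      · exact Or.inl hl0
      right
      have h1 : n.factorization 2 = 0 := by
        apply Nat.factorization_eq_zero_of_not_dvd
        rw [← even_iff_two_dvd]
        exact Nat.not_even_iff_odd.mpr hodd
      have := fact2_pos hl hl0
      omega
    · by_cases hl0 : ℓ = 0
      · exact Or.inl hl0
      · right
        obtain ⟨hne, hno⟩ := hdecomp n hn0
        obtain ⟨hle, hlo⟩ := hdecomp ℓ hl0
        have := h3 _ _ _ _ hno hlo hne hle
        omega
  · rintro (h | h)
    · exact Or.inl h
    · have hl0 : ℓ ≠ 0 := by rintro rfl; simp at h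
      have hle : Even ℓ := by
        rw [even_iff_two_dvd]
        have h1 : 1 ≤ ℓ.factorization 2 := by omega
        calc (2:ℕ) = 2^1 := (pow_one 2).symm
          _ ∣ 2 ^ ℓ.factorization 2 := pow_dvd_pow _ h1
          _ ∣ ℓ := Nat.ordProj_dvd ℓ 2
      rcases Nat.even_or_odd n with hne | hno
      · right; right
        refine ⟨hle, hne, fun t₁ u t₂ v hu hv h1 h2 => ?_⟩
        have e1 := nu2_unique hu h1 hn0
        have e2 := nu2_unique hv h2 hl0
        omega
      · exact Or.inr (Or.inl ⟨hle, hno⟩)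


private lemma d_odd {p ℓ : ℕ} (hp : p.Prime) (hp2 : p ≠ 2) (hl : Even ℓ) :
    Odd ((p ^ ℓ + 1) / 2) := by
  obtain ⟨m, rfl⟩ := hl
  have hpodd : Odd p := hp.odd_of_ne_two hp2
  obtain ⟨j, hj⟩ : Odd (p ^ m) := hpodd.pow
  have h1 : p ^ (m + m) = (p ^ m) * (p ^ m) := by rw [← pow_add]
  rw [h1, hj]
  have h2 : (2*j+1) * (2*j+1) + 1 = 2 * (2*j*j + 2*j + 1) := by ring
  rw [h2, Nat.mul_div_cancel_left _ (by norm_num)]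
  exact ⟨j*j + j, by ring⟩

private lemma gcd_iff (p ℓ n : ℕ) (hp : p.Prime) (hp2 : p ≠ 2) (hn : 2 ≤ n) :
    Nat.gcd ((p ^ ℓ + 1) / 2) (p ^ (2 * n) - 1) = 1 ↔
      (ℓ = 0 ∨ n.factorization 2 < ℓ.factorization 2) := by
  have hp1 : 2 ≤ p := hp.two_le
  have hp3 : 3 ≤ p := by rcases Nat.lt_or_ge p 3 with h | h
                         · interval_cases p <;> simp_all
                         · exact h
  have hpodd : Odd p := hp.odd_of_ne_two hp2
  have hplodd : ∀ m : ℕ, Odd (p ^ m) := fun m => hpodd.pow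
  have h2d : ∀ m : ℕ, 2 * ((p ^ m + 1) / 2) = p ^ m + 1 := by
    intro m
    obtain ⟨j, hj⟩ := hplodd m
    exact Nat.mul_div_cancel' ⟨j + 1, by omega⟩
  constructor
  · intro hgcd
    by_contra hcon
    push_neg at hcon
    obtain ⟨hl0, hnu⟩ := hcon
    set g := 2 ^ ℓ.factorization 2 with hg
    have hgl : g ∣ ℓ := Nat.ordProj_dvd ℓ 2
    have hlg_odd : Odd (ℓ / g) := by
      rw [← Nat.not_even_iff_odd, even_iff_two_dvd]
      exact Nat.not_dvd_ordCompl Nat.prime_two hl0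
    have hgn : g ∣ n := by
      have h1 : ℓ.factorization 2 ≤ n.factorization 2 := by omega
      calc g ∣ 2 ^ n.factorization 2 := pow_dvd_pow _ h1
        _ ∣ n := Nat.ordProj_dvd n 2
    have hd1 : p ^ g + 1 ∣ p ^ ℓ + 1 := by
      have h1 : p ^ ℓ = (p ^ g) ^ (ℓ / g) := by rw [← pow_mul, Nat.mul_div_cancel' hgl]
      rw [h1]
      simpa using Odd.nat_add_dvd_pow_add_pow (p ^ g) 1 hlg_odd
    have hd2 : p ^ g + 1 ∣ p ^ (2 * n) - 1 := by
      have ha : 1 ≤ p ^ g := Nat.one_le_pow _ _ (by omega)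
      have h1 : p ^ g + 1 ∣ (p ^ g) * (p ^ g) - 1 := by
        have ha2 : 1 ≤ p ^ g * p ^ g := Nat.one_le_iff_ne_zero.mpr (by positivity)
        have h : (p^g) * (p^g) - 1 = (p^g - 1) * (p^g + 1) := by
          zify [ha, ha2]; ring
        rw [h]; exact Dvd.intro_left _ rfl
      have h2 : (p ^ g) * (p ^ g) - 1 ∣ p ^ (2 * n) - 1 := by
        obtain ⟨c, hc⟩ := hgn
        have h : p ^ (2 * n) = ((p ^ g) * (p ^ g)) ^ c := by
          rw [← pow_add, ← pow_mul, hc]; ring_nf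
        rw [h]
        simpa using Nat.sub_dvd_pow_sub_pow ((p^g) * (p^g)) 1 c
      exact h1.trans h2
    have hev : 2 ∣ p ^ g + 1 := by obtain ⟨j, hj⟩ := hplodd g; omega
    have hg1 : 1 ≤ g := Nat.one_le_two_pow
    have hgb : 2 ≤ (p ^ g + 1) / 2 := by
      have h3 : 3 ≤ p ^ g := by
        calc 3 ≤ p := hp3
          _ = p^1 := (pow_one p).symm
          _ ≤ p ^ g := Nat.pow_le_pow_right (by omega) hg1
      omega
    have hda : (p ^ g + 1) / 2 ∣ (p ^ ℓ + 1) / 2 := by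
      obtain ⟨c, hc⟩ := hd1
      refine ⟨c, ?_⟩
      have hg2 := h2d g
      have h1 : p ^ ℓ + 1 = 2 * (((p ^ g + 1) / 2) * c) := by
        rw [hc]
        conv_lhs => rw [← hg2]
        ring
      have h2 := h2d ℓ
      omega
    have hdb : (p ^ g + 1) / 2 ∣ p ^ (2 * n) - 1 :=
      (Nat.div_dvd_of_dvd hev).trans hd2
    have h1 : (p ^ g + 1) / 2 ∣ 1 := by
      have := Nat.dvd_gcd hda hdb
      rwa [hgcd] at this
    have := Nat.le_of_dvd one_pos h1
    omega
  · rintro (rfl | hnu)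
    · simp
    have hl0 : ℓ ≠ 0 := by rintro rfl; simp at hnu
    have hle : Even ℓ := by
      rw [even_iff_two_dvd]
      calc (2:ℕ) = 2^1 := (pow_one 2).symm
        _ ∣ 2 ^ ℓ.factorization 2 := pow_dvd_pow _ (by omega)
        _ ∣ ℓ := Nat.ordProj_dvd ℓ 2
    set d := (p ^ ℓ + 1) / 2 with hd
    by_contra hne
    set r := (Nat.gcd d (p ^ (2 * n) - 1)).minFac with hr
    have hrp : r.Prime := Nat.minFac_prime hne
    have hrd : r ∣ d := hr ▸ (Nat.minFac_dvd _).trans (Nat.gcd_dvd_left _ _)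
    have hrQ : r ∣ p ^ (2 * n) - 1 := hr ▸ (Nat.minFac_dvd _).trans (Nat.gcd_dvd_right _ _)
    have hr2 : r ≠ 2 := by
      intro h
      have h1 : ¬ (2 ∣ d) := by
        intro hdvd
        exact (Nat.not_even_iff_odd.mpr (d_odd hp hp2 hle)) (even_iff_two_dvd.mpr hdvd)
      exact h1 (h ▸ hrd)
    have hrl : r ∣ p ^ ℓ + 1 := hrd.trans ⟨2, by rw [← h2d ℓ]; ring⟩
    have hQ1 : 1 ≤ p ^ (2 * n) := Nat.one_le_pow _ _ (by omega)
    -- cast to ZMod r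
    have hc1 : ((p : ZMod r)) ^ ℓ = -1 := by
      have h0 : ((p ^ ℓ + 1 : ℕ) : ZMod r) = 0 :=
        (ZMod.natCast_eq_zero_iff _ _).mpr hrl
      push_cast at h0
      linear_combination h0
    have hc2 : ((p : ZMod r)) ^ (2 * n) = 1 := by
      have h0 : ((p ^ (2*n) - 1 : ℕ) : ZMod r) = 0 :=
        (ZMod.natCast_eq_zero_iff _ _).mpr hrQ
      have h1 : (p ^ (2*n) - 1) + 1 = p ^ (2*n) := Nat.sub_add_cancel hQ1
      have h2 : ((p ^ (2*n) : ℕ) : ZMod r) = 1 := by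
        rw [← h1]; push_cast [h0]; ring
      push_cast at h2
      exact h2
    set m := orderOf ((p : ZMod r)) with hm
    have hm2n : m ∣ 2 * n := orderOf_dvd_of_pow_eq_one hc2
    have hm2l : m ∣ 2 * ℓ := by
      apply orderOf_dvd_of_pow_eq_one
      rw [mul_comm, pow_mul, hc1]
      ring
    have hmnl : ¬ (m ∣ ℓ) := by
      intro h
      have h1 : ((p : ZMod r)) ^ ℓ = 1 := orderOf_dvd_iff_pow_eq_one.mp h
      rw [hc1] at h1
      have h2 : ((2 : ℕ) : ZMod r) = 0 := by push_cast; linear_combination -h1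
      have h3 : r ∣ 2 := (ZMod.natCast_eq_zero_iff _ _).mp h2
      have := (Nat.prime_dvd_prime_iff_eq hrp Nat.prime_two).mp h3
      exact hr2 this
    have hm0 : m ≠ 0 := by
      intro h
      rw [h] at hm2n
      omega
    -- 2-adic analysis of m
    set a := m.factorization 2 with ha
    set m' := m / 2 ^ a with hm'
    have hmfac : 2 ^ a * m' = m := Nat.ordProj_mul_ordCompl_eq_self m 2
    have hm'odd : ¬ (2 ∣ m') := Nat.not_dvd_ordCompl Nat.prime_two hm0
    have hcop : Nat.Coprime 2 m' := Nat.prime_two.coprime_iff_not_dvd.mpr hm'odd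
    have hm'm : m' ∣ m := ⟨2 ^ a, by rw [← hmfac]; ring⟩
    have key : ¬ (a ≤ ℓ.factorization 2) := by
      intro h
      have h2a : 2 ^ a ∣ ℓ := (pow_dvd_pow 2 h).trans (Nat.ordProj_dvd ℓ 2)
      have hm'2l : m' ∣ 2 * ℓ := hm'm.trans hm2l
      have hm'l : m' ∣ ℓ := (hcop.symm).dvd_of_dvd_mul_left hm'2l
      have h3 : 2 ^ a * m' ∣ ℓ :=
        Nat.Coprime.mul_dvd_of_dvd_of_dvd (Nat.Coprime.pow_left a hcop) h2a hm'l
      rw [hmfac] at h3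
      exact hmnl h3
    have h2am : 2 ^ a ∣ 2 * n := (Nat.ordProj_dvd m 2).trans hm2n
    have hub : a ≤ (2*n).factorization 2 :=
      (Nat.Prime.pow_dvd_iff_le_factorization Nat.prime_two (by omega)).mp h2am
    have hfac2n : (2*n).factorization 2 = 1 + n.factorization 2 := by
      rw [Nat.factorization_mul two_ne_zero (by omega : n ≠ 0)]
      simp [Nat.Prime.factorization_self Nat.prime_two]
    rw [hfac2n] at hub
    exact key (by omega)


private lemma bij_iff_gcd (p ℓ n : ℕ) (hp : p.Prime) (hp2 : p ≠ 2) (hn : 2 ≤ n)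
    (F : Type) [Field F] [Fintype F] (hF : Fintype.card F = p ^ n) :
    (∀ a : F, Function.Bijective fun x : F =>
        (x + a) ^ ((p ^ ℓ + 1) / 2) + x ^ ((p ^ ℓ + 1) / 2)) ↔
    Nat.gcd ((p ^ ℓ + 1) / 2) (p ^ (2 * n) - 1) = 1 := by
  haveI : Fact p.Prime := ⟨hp⟩
  -- characteristic of F is p
  haveI hchF : CharP F p := by
    obtain ⟨m, hrp, hcard⟩ := FiniteField.card F (ringChar F)
    have h1 : p ∣ (ringChar F) ^ (m : ℕ) := by
      rw [← hcard, hF]; exact dvd_pow_self p (by omega)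
    have h2 : p = ringChar F :=
      (Nat.prime_dvd_prime_iff_eq hp hrp).mp (hp.dvd_of_dvd_pow h1)
    rw [h2]; exact ringChar.charP F
  have hp1 : 2 ≤ p := hp.two_le
  set d := (p ^ ℓ + 1) / 2 with hd
  set q := p ^ n with hq
  set Q := p ^ (2 * n) with hQ
  have hpodd : Odd p := hp.odd_of_ne_two hp2
  have hplodd : Odd (p ^ ℓ) := hpodd.pow
  have h2d : 2 * d = p ^ ℓ + 1 := by
    obtain ⟨j, hj⟩ := hplodd
    exact Nat.mul_div_cancel' ⟨j + 1, by omega⟩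
  have hpl1 : 1 ≤ p ^ ℓ := Nat.one_le_pow _ _ (by omega)
  have hd0 : d ≠ 0 := by omega
  have hq1 : 1 ≤ q := Nat.one_le_pow _ _ (by omega)
  have hQ1 : 1 ≤ Q := Nat.one_le_pow _ _ (by omega)
  have hQqq : Q = q * q := by rw [hq, hQ, two_mul, pow_add]
  have hqQdvd : q - 1 ∣ Q - 1 := by
    have h1 := Nat.sub_dvd_pow_sub_pow q 1 2
    simpa [← hQqq, pow_two] using h1
  set K := AlgebraicClosure F
  haveI : CharP K p := charP_of_injective_algebraMap (algebraMap F K).injective p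
  set e : F →+* K := algebraMap F K with he
  have hei : Function.Injective e := e.injective
  have h2F : (2 : F) ≠ 0 := by
    intro h
    have h1 : ((2 : ℕ) : F) = 0 := by push_cast; exact h
    have h3 := (CharP.cast_eq_zero_iff F p 2).mp h1
    exact hp2 ((Nat.prime_dvd_prime_iff_eq hp Nat.prime_two).mp h3)
  have h2K : (2 : K) ≠ 0 := by
    intro h
    apply h2F
    apply hei
    rw [map_ofNat, map_zero, h]
  -- q-power facts in K
  have hq_add : ∀ x y : K, (x + y) ^ q = x ^ q + y ^ q := fun x y => add_pow_char_pow x y p n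
  have hq_sub : ∀ x y : K, (x - y) ^ q = x ^ q - y ^ q := fun x y => sub_pow_char_pow x y n
  have hw_fix : ∀ w : F, (e w) ^ q = e w := by
    intro w
    rw [← map_pow, ← hF]
    congr 1
    exact FiniteField.pow_card w
  have h2q : (2 : K) ^ q = 2 := by
    rw [(by norm_num : (2:K) = 1 + 1), hq_add]
    norm_num
  -- construction of v for each w
  have hv_ex : ∀ w : F, ∃ v : K, v ≠ 0 ∧ v ^ (Q - 1) = 1 ∧ v ^ 2 + 1 = 2 * e w * v := by
    intro w
    obtain ⟨z, hz⟩ := IsAlgClosed.exists_pow_nat_eq ((e w) ^ 2 - 1) (n := 2) (by norm_num)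
    set v := e w + z with hv
    have hveq : v ^ 2 + 1 = 2 * e w * v := by rw [hv]; linear_combination hz
    have hv0 : v ≠ 0 := by
      intro h0
      rw [h0] at hveq
      simp at hveq
    have hvq : (v ^ q) ^ 2 + 1 = 2 * e w * v ^ q := by
      have h := congrArg (· ^ q) hveq
      rw [hq_add, mul_pow, mul_pow, h2q, hw_fix, one_pow, ← pow_mul, mul_comm 2 q, pow_mul] at h
      exact h
    have hprod : v * (2 * e w - v) = 1 := by linear_combination -hveq
    have hfac : (v ^ q - v) * (v ^ q - (2 * e w - v)) = 0 := by
      linear_combination hvq + hprod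
    have hvQ : v ^ Q = v := by
      rcases mul_eq_zero.mp hfac with h | h
      · have hqq : v ^ q = v := by linear_combination h
        rw [hQqq, pow_mul, hqq, hqq]
      · have hqq : v ^ q = 2 * e w - v := by linear_combination h
        rw [hQqq, pow_mul, hqq, hq_sub, mul_pow, h2q, hw_fix, hqq]
        ring
    refine ⟨v, hv0, ?_, hveq⟩
    have h1 : v ^ (Q - 1) * v = 1 * v := by
      rw [← pow_succ, Nat.sub_add_cancel hQ1, hvQ, one_mul]
    exact mul_right_cancel₀ hv0 h1
  -- the master computation: for each w, value of psi in terms of v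
  have hkey : ∀ w : F, ∃ v : K, v ≠ 0 ∧ v ^ (Q - 1) = 1 ∧ v ^ 2 + 1 = 2 * e w * v ∧
      2 ^ d * e ((w + 1) ^ d + (w - 1) ^ d) = 2 * (v ^ d + (v⁻¹) ^ d) := by
    intro w
    obtain ⟨v, hv0, hvQ, hveq⟩ := hv_ex w
    refine ⟨v, hv0, hvQ, hveq, ?_⟩
    obtain ⟨s, hs⟩ := IsAlgClosed.exists_pow_nat_eq v (n := 2) (by norm_num)
    have hs0 : s ≠ 0 := by rintro rfl; simp at hs; exact hv0 hs.symm
    have hst : s * s⁻¹ = 1 := mul_inv_cancel₀ hs0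
    have hti : (s⁻¹) ^ 2 = v⁻¹ := by rw [inv_pow, hs]
    have hw2 : 2 * e w = s ^ 2 + (s⁻¹) ^ 2 := by
      rw [hs, hti]
      have hvi : v * v⁻¹ = 1 := mul_inv_cancel₀ hv0
      linear_combination -v⁻¹ * hveq + (v - 2 * e w) * hvi
    have hid := key_id (K := K) p ℓ d h2d hst hw2
    rw [hs, hti] at hid
    have hmap : e ((w + 1) ^ d + (w - 1) ^ d) = (e w + 1) ^ d + (e w - 1) ^ d := by
      rw [map_add, map_pow, map_pow, map_add, map_sub, map_one]
    rw [hmap]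
    exact hid
  constructor
  · -- LHS → gcd = 1
    intro hbij
    have hψ : Function.Injective (fun w : F => (w + 1) ^ d + (w - 1) ^ d) := by
      intro w₁ w₂ h
      simp only at h
      have hrel : ∀ w : F, (w + 1) ^ d + (w - 1) ^ d =
          2 ^ d * ((((w - 1) / 2) + 1) ^ d + ((w - 1) / 2) ^ d) := by
        intro w
        have c1 : (2 : F) * ((w - 1) / 2 + 1) = w + 1 := by field_simp; ring
        have c2 : (2 : F) * ((w - 1) / 2) = w - 1 := by field_simp
        calc (w + 1) ^ d + (w - 1) ^ d
            = (2 * ((w - 1) / 2 + 1)) ^ d + (2 * ((w - 1) / 2)) ^ d := by rw [c1, c2]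
          _ = 2 ^ d * ((((w - 1) / 2) + 1) ^ d + ((w - 1) / 2) ^ d) := by
              rw [mul_pow, mul_pow, mul_add]
      rw [hrel w₁, hrel w₂] at h
      have h2 := mul_left_cancel₀ (pow_ne_zero d h2F) h
      have h3 := (hbij 1).injective h2
      have h4 : w₁ - 1 = w₂ - 1 := by
        have h5 := congrArg (· * (2:F)) h3
        simpa [div_mul_cancel₀ _ h2F] using h5
      exact sub_left_inj.mp h4
    by_contra hne
    set r := (Nat.gcd d (Q - 1)).minFac with hr
    have hrp : r.Prime := Nat.minFac_prime hne
    have hrd : r ∣ d := (Nat.minFac_dvd _).trans (Nat.gcd_dvd_left _ _)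
    have hrQ : r ∣ Q - 1 := (Nat.minFac_dvd _).trans (Nat.gcd_dvd_right _ _)
    rcases eq_or_ne r 2 with hr2 | hr2
    · have hdev : Even d := (even_iff_two_dvd).mpr (hr2 ▸ hrd)
      have h1 : ((1:F) + 1) ^ d + ((1:F) - 1) ^ d = ((-1:F) + 1) ^ d + ((-1:F) - 1) ^ d := by
        have hneg : ((-1:F) - 1) ^ d = ((1:F) + 1) ^ d := by
          rw [(by ring : ((-1:F) - 1) = -(1 + 1)), hdev.neg_pow]
        rw [hneg]
        simp [zero_pow hd0]
      have h2 := hψ h1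
      have h3 : (2 : F) = 0 := by linear_combination h2
      exact h2F h3
    · have hr3 : 3 ≤ r := by
        have := hrp.two_le
        omega
      have hrp_ne : r ≠ p := by
        intro h
        have h1 : p ∣ Q := dvd_pow_self p (by omega)
        have h2 : Q - (Q - 1) = 1 := by omega
        have h3 : p ∣ 1 := h2 ▸ Nat.dvd_sub h1 (h ▸ hrQ)
        have := Nat.dvd_one.mp h3
        omega
      -- construct a nontrivial r-th root of unity
      set S : Polynomial K := ∑ i ∈ Finset.range r, (Polynomial.X : Polynomial K) ^ i with hS
      have hSmul : S * (Polynomial.X - 1) = Polynomial.X ^ r - 1 := geom_sum_mul _ r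
      have hSdeg : S.degree ≠ 0 := by
        intro h0
        have hSC : S = Polynomial.C (S.coeff 0) := Polynomial.eq_C_of_degree_le_zero h0.le
        have h1 : (Polynomial.X ^ r - 1 : Polynomial K).natDegree = r := by
          have : (Polynomial.X ^ r - 1 : Polynomial K) = Polynomial.X ^ r - Polynomial.C 1 := by
            simp
          rw [this, Polynomial.natDegree_X_pow_sub_C]
        have h2 : (S * (Polynomial.X - 1)).natDegree ≤ 1 := by
          refine le_trans (Polynomial.natDegree_mul_le) ?_
          rw [hSC]
          have e1 : (Polynomial.C (S.coeff 0)).natDegree = 0 := Polynomial.natDegree_C _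
          have e2 : (Polynomial.X - 1 : Polynomial K).natDegree ≤ 1 := by
            have : (Polynomial.X - 1 : Polynomial K) = Polynomial.X - Polynomial.C 1 := by simp
            rw [this, Polynomial.natDegree_X_sub_C]
          omega
        rw [hSmul, h1] at h2
        omega
      obtain ⟨ζ, hζroot⟩ := IsAlgClosed.exists_root S hSdeg
      have hζS : Polynomial.eval ζ S = 0 := hζroot
      have hζr : ζ ^ r = 1 := by
        have h1 := congrArg (Polynomial.eval ζ) hSmul
        simp only [Polynomial.eval_mul, Polynomial.eval_sub, Polynomial.eval_pow,
          Polynomial.eval_X, Polynomial.eval_one, hζS, zero_mul] at h1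
        linear_combination -h1
      have hζ1 : ζ ≠ 1 := by
        intro h
        rw [h] at hζS
        rw [hS] at hζS
        simp only [Polynomial.eval_finset_sum, Polynomial.eval_pow, Polynomial.eval_X,
          one_pow, Finset.sum_const, Finset.card_range, nsmul_eq_mul, mul_one] at hζS
        have h2 := (CharP.cast_eq_zero_iff K p r).mp hζS
        exact hrp_ne ((Nat.prime_dvd_prime_iff_eq hp hrp).mp h2).symm
      have hζ0 : ζ ≠ 0 := by
        intro h
        rw [h, zero_pow (by omega : r ≠ 0)] at hζr
        exact zero_ne_one hζr
      have hζQ : ζ ^ (Q - 1) = 1 := by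
        obtain ⟨c, hc⟩ := hrQ
        rw [hc, pow_mul, hζr, one_pow]
      have hζd : ζ ^ d = 1 := by
        obtain ⟨c, hc⟩ := hrd
        rw [hc, pow_mul, hζr, one_pow]
      have hζq : ζ ^ q = ζ ∨ ζ ^ q = ζ⁻¹ := by
        have hfac : (q - 1) * (q + 1) = Q - 1 := by
          rw [hQqq]
          have h1 : 1 ≤ q * q := Nat.one_le_iff_ne_zero.mpr (by positivity)
          zify [hq1, h1]
          ring
        have hdvd : r ∣ (q - 1) * (q + 1) := hfac ▸ hrQ
        rcases (Nat.Prime.dvd_mul hrp).mp hdvd with h | h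
        · left
          obtain ⟨c, hc⟩ := h
          have h1 : ζ ^ (q - 1) = 1 := by rw [hc, pow_mul, hζr, one_pow]
          calc ζ ^ q = ζ ^ (q - 1 + 1) := by rw [Nat.sub_add_cancel hq1]
            _ = ζ ^ (q - 1) * ζ := pow_succ _ _
            _ = ζ := by rw [h1, one_mul]
        · right
          obtain ⟨c, hc⟩ := h
          have h1 : ζ ^ (q + 1) = 1 := by rw [hc, pow_mul, hζr, one_pow]
          have h2 : ζ ^ q * ζ = 1 := by rw [← pow_succ]; exact h1
          exact eq_inv_of_mul_eq_one_left h2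
      set w : K := (ζ + ζ⁻¹) / 2 with hwdef
      have hwq : w ^ q = w := by
        rw [hwdef, div_pow, hq_add, h2q, inv_pow]
        rcases hζq with h | h
        · rw [h]
        · rw [h, inv_inv, add_comm]
      obtain ⟨w₀, hw₀⟩ := mem_range_algebraMap (F := F) (K := K) (x := w) (by rw [hF]; exact hwq)
      -- ψ(w₀) = ψ(1)
      obtain ⟨s, hs⟩ := IsAlgClosed.exists_pow_nat_eq ζ (n := 2) (by norm_num)
      have hs0 : s ≠ 0 := by rintro rfl; simp at hs; exact hζ0 hs.symm
      have hst : s * s⁻¹ = 1 := mul_inv_cancel₀ hs0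
      have hti : (s⁻¹) ^ 2 = ζ⁻¹ := by rw [inv_pow, hs]
      have hw2 : 2 * w = s ^ 2 + (s⁻¹) ^ 2 := by
        rw [hs, hti, hwdef]
        exact mul_div_cancel₀ _ h2K
      have hid := key_id (K := K) p ℓ d h2d hst hw2
      rw [hs, hti, hζd] at hid
      have hinvd : (ζ⁻¹) ^ d = 1 := by rw [inv_pow, hζd, inv_one]
      rw [hinvd] at hid
      have hid1 := key_id (K := K) p ℓ d h2d (s := 1) (t := 1) (w := 1) (by norm_num) (by norm_num)
      simp only [one_pow] at hid1
      have heq : (w + 1) ^ d + (w - 1) ^ d = ((1:K) + 1) ^ d + ((1:K) - 1) ^ d := by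
        apply mul_left_cancel₀ (pow_ne_zero d h2K)
        rw [hid, hid1]
      have hmap₀ : e ((w₀ + 1) ^ d + (w₀ - 1) ^ d) = (w + 1) ^ d + (w - 1) ^ d := by
        rw [map_add, map_pow, map_pow, map_add, map_sub, map_one, hw₀]
      have hmap₁ : e (((1:F) + 1) ^ d + ((1:F) - 1) ^ d) = ((1:K) + 1) ^ d + ((1:K) - 1) ^ d := by
        rw [map_add, map_pow, map_pow, map_add, map_sub, map_one]
      have hψeq : (w₀ + 1) ^ d + (w₀ - 1) ^ d = ((1:F) + 1) ^ d + ((1:F) - 1) ^ d := by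
        apply hei
        rw [hmap₀, hmap₁, heq]
      have hw₀1 : w₀ = 1 := hψ hψeq
      have hw1 : w = 1 := by rw [← hw₀, hw₀1, map_one]
      have hζi : ζ * ζ⁻¹ = 1 := mul_inv_cancel₀ hζ0
      have hsum : ζ + ζ⁻¹ = 2 := by
        rw [hwdef] at hw1
        exact (div_eq_one_iff_eq h2K).mp hw1
      have hζsq : (ζ - 1) ^ 2 = 0 := by
        linear_combination ζ * hsum - hζi
      exact hζ1 (sub_eq_zero.mp (pow_eq_zero_iff (by norm_num : (2:ℕ) ≠ 0) |>.mp hζsq))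
  · -- gcd = 1 → LHS
    intro hgcd
    have hψinj : ∀ w₁ w₂ : F, (w₁ + 1) ^ d + (w₁ - 1) ^ d = (w₂ + 1) ^ d + (w₂ - 1) ^ d →
        w₁ = w₂ := by
      intro w₁ w₂ hpsi
      obtain ⟨v₁, hv10, hv1Q, hq1v, hk1⟩ := hkey w₁
      obtain ⟨v₂, hv20, hv2Q, hq2v, hk2⟩ := hkey w₂
      rw [hpsi] at hk1
      have hAB : v₁ ^ d + (v₁⁻¹) ^ d = v₂ ^ d + (v₂⁻¹) ^ d :=
        mul_left_cancel₀ h2K (hk1.symm.trans hk2)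
      rw [inv_pow, inv_pow] at hAB
      set A := v₁ ^ d with hA
      set B := v₂ ^ d with hB
      have hA0 : A ≠ 0 := pow_ne_zero _ hv10
      have hB0 : B ≠ 0 := pow_ne_zero _ hv20
      have hAi : A * A⁻¹ = 1 := mul_inv_cancel₀ hA0
      have hBi : B * B⁻¹ = 1 := mul_inv_cancel₀ hB0
      have hfac : (A - B) * (A * B - 1) = 0 := by
        linear_combination A * B * hAB - B * hAi + A * hBi
      rcases mul_eq_zero.mp hfac with h | h
      · have hABeq : A = B := sub_eq_zero.mp h
        have hz1 : (v₁ * v₂⁻¹) ^ d = 1 := by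
          rw [mul_pow, inv_pow, ← hA, ← hB, hABeq, mul_inv_cancel₀ hB0]
        have hz2 : (v₁ * v₂⁻¹) ^ (Q - 1) = 1 := by
          rw [mul_pow, inv_pow, hv1Q, hv2Q, inv_one, one_mul]
        have hz := pow_gcd_one hz1 hz2 hgcd
        have hv12 : v₁ = v₂ := (mul_inv_eq_one₀ hv20).mp hz
        apply hei
        have h5 : 2 * e w₁ * v₁ = 2 * e w₂ * v₁ := by
          rw [← hq1v, hv12, hq2v]
        have h6 := mul_right_cancel₀ hv10 h5
        exact mul_left_cancel₀ h2K h6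
      · have hABeq : A * B = 1 := by linear_combination h
        have hz1 : (v₁ * v₂) ^ d = 1 := by rw [mul_pow, ← hA, ← hB]; exact hABeq
        have hz2 : (v₁ * v₂) ^ (Q - 1) = 1 := by rw [mul_pow, hv1Q, hv2Q, one_mul]
        have hz := pow_gcd_one hz1 hz2 hgcd
        apply hei
        have h5 : 2 * e w₁ * v₂ = 2 * e w₂ * v₂ := by
          linear_combination (-(v₂ ^ 2)) * hq1v + hq2v + (v₁ * v₂ + 1 - 2 * (e w₁) * v₂) * hz
        have h6 := mul_right_cancel₀ hv20 h5
        exact mul_left_cancel₀ h2K h6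
    intro a
    rw [← Finite.injective_iff_bijective]
    intro x y hxy
    simp only at hxy
    by_cases ha : a = 0
    · subst ha
      rw [add_zero, add_zero] at hxy
      have hxd : x ^ d = y ^ d := by
        have h2 : (2:F) * x ^ d = 2 * y ^ d := by linear_combination hxy
        exact mul_left_cancel₀ h2F h2
      have hgq : Nat.gcd d (q - 1) = 1 := by
        have h1 : Nat.gcd d (q - 1) ∣ Nat.gcd d (Q - 1) :=
          Nat.dvd_gcd (Nat.gcd_dvd_left _ _) ((Nat.gcd_dvd_right _ _).trans hqQdvd)
        rw [hgcd] at h1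
        exact Nat.dvd_one.mp h1
      by_cases hx0 : x = 0
      · subst hx0
        rw [zero_pow hd0, eq_comm] at hxd
        exact ((pow_eq_zero_iff hd0).mp hxd).symm
      · have hy0 : y ≠ 0 := by
          intro h
          subst h
          rw [zero_pow hd0] at hxd
          exact hx0 ((pow_eq_zero_iff hd0).mp hxd)
        have hz1 : (x * y⁻¹) ^ d = 1 := by
          rw [mul_pow, inv_pow, hxd, mul_inv_cancel₀ (pow_ne_zero _ hy0)]
        have hz2 : (x * y⁻¹) ^ (q - 1) = 1 := by
          have hne : x * y⁻¹ ≠ 0 := mul_ne_zero hx0 (inv_ne_zero hy0)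
          rw [← hF]
          exact FiniteField.pow_card_sub_one_eq_one _ hne
        exact (mul_inv_eq_one₀ hy0).mp (pow_gcd_one hz1 hz2 hgq)
    · have hrel : ∀ x : F, (x + a) ^ d + x ^ d =
          (a / 2) ^ d * ((2 * x / a + 1 + 1) ^ d + (2 * x / a + 1 - 1) ^ d) := by
        intro x
        have c1 : (a / 2) * (2 * x / a + 1 + 1) = x + a := by field_simp; ring
        have c2 : (a / 2) * (2 * x / a + 1 - 1) = x := by field_simp; ring
        rw [mul_add, ← mul_pow, ← mul_pow, c1, c2]
      rw [hrel x, hrel y] at hxy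
      have ha2 : (a / 2) ^ d ≠ 0 := pow_ne_zero _ (div_ne_zero ha h2F)
      have h3 := mul_left_cancel₀ ha2 hxy
      have h4 := hψinj _ _ h3
      have h5 : 2 * x / a = 2 * y / a := by linear_combination h4
      have h6 : (2:F) * x = 2 * y := by
        have h7 := congrArg (· * a) h5
        simpa [div_mul_cancel₀ _ ha] using h7
      exact mul_left_cancel₀ h2F h6


theorem stmt_9 (p ℓ n : ℕ) (hp : p.Prime) (hp2 : p ≠ 2) (hn : 2 ≤ n) (hℓn : ℓ < n)
    (F : Type) [Field F] [Fintype F] (hF : Fintype.card F = p ^ n) :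
    (∀ a : F, Function.Bijective fun x : F =>
        (x + a) ^ ((p ^ ℓ + 1) / 2) + x ^ ((p ^ ℓ + 1) / 2)) ↔
      (ℓ = 0 ∨ (Even ℓ ∧ Odd n) ∨
        (Even ℓ ∧ Even n ∧
          ∀ t₁ u t₂ v : ℕ, Odd u → Odd v → n = 2 ^ t₁ * u → ℓ = 2 ^ t₂ * v → t₁ + 1 ≤ t₂)) := by
  rw [bij_iff_gcd p ℓ n hp hp2 hn F hF, gcd_iff p ℓ n hp hp2 hn]
  exact (rhs_iff ℓ n hn).symm
end

section
/- Let a be a nonzero element of F_{p^n}. The d-th Dickson polynomial of the first kind D_d(x, a) permutes F_{p^n} if and only if gcd(d, p^{2n} - 1) = 1. -/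
open Polynomial

private lemma dickson_eval_add_inv' {K : Type*} [Field K] (a y : K) (hy : y ≠ 0) (d : ℕ) :
    Polynomial.eval (y + a * y⁻¹) (Polynomial.dickson 1 a d) = y ^ d + (a * y⁻¹) ^ d := by
  have hab : y * (a * y⁻¹) = a := by field_simp
  suffices H : ∀ k : ℕ,
      eval (y + a * y⁻¹) (dickson 1 a k) = y ^ k + (a * y⁻¹) ^ k ∧
      eval (y + a * y⁻¹) (dickson 1 a (k + 1)) = y ^ (k + 1) + (a * y⁻¹) ^ (k + 1) by
    exact (H d).1
  intro k
  induction k with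
  | zero =>
    constructor
    · simp [Polynomial.dickson_zero]
      norm_num
    · simp [Polynomial.dickson_one]
  | succ k ih =>
    refine ⟨ih.2, ?_⟩
    rw [Polynomial.dickson_add_two]
    simp only [eval_sub, eval_mul, eval_X, eval_C, ih.1, ih.2]
    linear_combination (y ^ k + (a * y⁻¹) ^ k) * hab

private lemma mem_range_of_pow_card_eq {F K : Type*} [Field F] [Fintype F] [Field K]
    (φ : F →+* K) (t : K) (ht : t ^ Fintype.card F = t) : ∃ u : F, φ u = t := by
  classical
  set q := Fintype.card F with hq
  have hq2 : 1 < q := Fintype.one_lt_card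
  set P : K[X] := X ^ q - X with hP
  have hdeg : P.degree = q := by
    rw [hP]
    have h1 : (X : K[X]).degree < (X ^ q : K[X]).degree := by
      rw [degree_X, degree_X_pow]; exact_mod_cast hq2
    rw [degree_sub_eq_left_of_degree_lt h1, degree_X_pow]
  have hP0 : P ≠ 0 := fun h => by simp [h] at hdeg
  have hnatdeg : P.natDegree = q := natDegree_eq_of_degree_eq_some hdeg
  have hroot : ∀ u : F, φ u ∈ P.roots := by
    intro u
    rw [mem_roots hP0]
    simp only [IsRoot, hP, eval_sub, eval_pow, eval_X]
    rw [← map_pow, FiniteField.pow_card, sub_self]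
  set S : Finset K := Finset.univ.image φ with hS
  have hSsub : S ⊆ P.roots.toFinset := by
    intro t' ht'
    obtain ⟨u, _, rfl⟩ := Finset.mem_image.mp ht'
    exact Multiset.mem_toFinset.mpr (hroot u)
  have hScard : S.card = q := by
    rw [hS, Finset.card_image_of_injective _ φ.injective, Finset.card_univ]
  have hTcard : P.roots.toFinset.card ≤ q :=
    le_trans (Multiset.toFinset_card_le _) (hnatdeg ▸ P.card_roots')
  have hST : S = P.roots.toFinset := Finset.eq_of_subset_of_card_le hSsub (by omega)
  have htT : t ∈ P.roots.toFinset := by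
    rw [Multiset.mem_toFinset, mem_roots hP0]
    simp [hP, IsRoot, ht]
  rw [← hST] at htT
  obtain ⟨u, _, hu⟩ := Finset.mem_image.mp htT
  exact ⟨u, hu⟩

private lemma roots_toFinset_card {K : Type*} [Field K] [IsAlgClosed K] [DecidableEq K] {m : ℕ} {c : K}
    (hm : (m : K) ≠ 0) (hc : c ≠ 0) : ((X ^ m - C c : K[X]).roots.toFinset.card = m) := by
  have hsep : (X ^ m - C c : K[X]).Separable := separable_X_pow_sub_C c hm hc
  have hsplits : ((X ^ m - C c : K[X])).Splits := IsAlgClosed.splits _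
  rw [Multiset.toFinset_card_of_nodup (nodup_roots hsep),
    splits_iff_card_roots.mp hsplits, natDegree_X_pow_sub_C]

theorem stmt_10 (p n d : ℕ) (hp : p.Prime) (hn : 0 < n) (hd : 0 < d)
    (F : Type) [Field F] [Fintype F] (hF : Fintype.card F = p ^ n) (a : F) (ha : a ≠ 0) :
    (Function.Bijective fun x : F => Polynomial.eval x (Polynomial.dickson 1 a d)) ↔
      Nat.gcd d (p ^ (2 * n) - 1) = 1 := by
  classical
  haveI : Fact p.Prime := ⟨hp⟩
  set q := p ^ n with hqdef
  have hq2 : 2 ≤ q := Nat.one_lt_pow hn.ne' hp.one_lt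
  -- characteristic of F is p
  haveI hcharF : CharP F p := by
    obtain ⟨p', hc⟩ := CharP.exists F
    haveI := hc
    obtain ⟨n', hp', hcard'⟩ := FiniteField.card F p'
    have hdvd : p ∣ p' ^ (n' : ℕ) := by
      rw [← hcard', hF]; exact dvd_pow_self p hn.ne'
    have : p = p' := (Nat.prime_dvd_prime_iff_eq hp hp').mp (hp.dvd_of_dvd_pow hdvd)
    rwa [this]
  set K := AlgebraicClosure F with hK
  set φ : F →+* K := algebraMap F K with hφdef
  have hφ : Function.Injective φ := φ.injective
  haveI : CharP K p := charP_of_injective_ringHom hφ p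
  have hφa0 : φ a ≠ 0 := fun h => ha (hφ (by simp [h]))
  have hfa : (φ a) ^ (q - 1) = 1 := by
    rw [← map_pow, ← hF, FiniteField.pow_card_sub_one_eq_one a ha, map_one]
  have hFq : ∀ u : F, u ^ q = u := fun u => by rw [← hF]; exact FiniteField.pow_card u
  have hq21 : p ^ (2 * n) - 1 = q ^ 2 - 1 := by rw [two_mul, pow_add, pow_two]
  have hqq : q ^ 2 - 1 = (q - 1) * (q + 1) := by
    have h1 : 1 ≤ q := by omega
    have h2 : 1 ≤ q ^ 2 := Nat.one_le_pow _ _ (by omega)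
    zify [h1, h2]
    ring
  have hfa2 : (φ a) ^ (q ^ 2 - 1) = 1 := by rw [hqq, pow_mul, hfa, one_pow]
  -- the Frobenius-type facts
  have hfrobq : ∀ x y : K, (x - y) ^ q = x ^ q - y ^ q := fun x y => by rw [hqdef]; exact sub_pow_char_pow x y n
  have hφq : ∀ u : F, (φ u) ^ q = φ u := fun u => by rw [← map_pow, hFq]
  -- existence of y
  have hroot : ∀ x : F, ∃ y : K, y ≠ 0 ∧ y ^ (q ^ 2 - 1) = 1 ∧ φ x = y + φ a * y⁻¹ := by
    intro x
    have hfq : (X ^ 2 - C (φ x) * X + C (φ a) : K[X]) =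
        C 1 * X ^ 2 + C (-φ x) * X + C (φ a) := by
      simp only [map_one, map_neg, one_mul]; ring
    have hdeg : (X ^ 2 - C (φ x) * X + C (φ a) : K[X]).degree ≠ 0 := by
      rw [hfq, degree_quadratic one_ne_zero]; exact by norm_num
    obtain ⟨y, hy⟩ := IsAlgClosed.exists_root _ hdeg
    have heval : y ^ 2 - φ x * y + φ a = 0 := by
      simpa [IsRoot] using hy
    have hy0 : y ≠ 0 := by
      intro h; rw [h] at heval; simp at heval; exact ha heval
    have hxy : φ x = y + φ a * y⁻¹ := by
      have e : y * y⁻¹ = 1 := mul_inv_cancel₀ hy0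
      linear_combination (-y⁻¹) * heval + (y - φ x) * e
    refine ⟨y, hy0, ?_, hxy⟩
    -- y ^ (q^2) = y
    have hy2 : y ^ 2 = φ x * y - φ a := by linear_combination heval
    have hz2 : (y ^ q) ^ 2 = φ x * y ^ q - φ a := by
      calc (y ^ q) ^ 2 = (y ^ 2) ^ q := by ring
        _ = (φ x * y - φ a) ^ q := by rw [hy2]
        _ = (φ x) ^ q * y ^ q - (φ a) ^ q := by rw [hfrobq, mul_pow]
        _ = φ x * y ^ q - φ a := by rw [hφq, hφq]
    have hfact : (y ^ q - y) * (y ^ q + y - φ x) = 0 := by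
      linear_combination hz2 - hy2
    have hyq2 : (y ^ q) ^ q = y := by
      rcases mul_eq_zero.mp hfact with h | h
      · have h1 : y ^ q = y := by linear_combination h
        rw [h1, h1]
      · have h1 : y ^ q = φ x - y := by linear_combination h
        calc (y ^ q) ^ q = (φ x - y) ^ q := by rw [h1]
          _ = φ x - y ^ q := by rw [hfrobq, hφq]
          _ = y := by rw [h1]; ring
    have hstep : y ^ (q ^ 2 - 1) * y = 1 * y := by
      rw [one_mul, ← pow_succ]
      have h3 : q ^ 2 - 1 + 1 = q ^ 2 := by have := Nat.one_le_pow 2 q (by omega); omega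
      rw [h3, pow_two, pow_mul, hyq2]
    exact mul_right_cancel₀ hy0 hstep
  rw [hq21]
  have hcomm : ∀ t : F, φ (eval t (dickson 1 a d)) = eval (φ t) (dickson 1 (φ a) d) := by
    intro t
    rw [← map_dickson φ, eval_map, eval₂_hom]
  have key : ∀ (x : F) (y : K), y ≠ 0 → φ x = y + φ a * y⁻¹ →
      φ (eval x (dickson 1 a d)) = y ^ d + (φ a * y⁻¹) ^ d := by
    intro x y hy0 hxy
    rw [hcomm, hxy, dickson_eval_add_inv' _ _ hy0]
  have hadd : ∀ x y : K, (x + y) ^ q = x ^ q + y ^ q :=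
    fun x y => by rw [hqdef]; exact add_pow_char_pow x y p n
  have hne : ∀ (k : ℕ) (c' : K), k ≠ 0 → (X ^ k - C c' : K[X]) ≠ 0 := fun k c' hk h =>
    hk (by simpa [natDegree_X_pow_sub_C] using congrArg natDegree h)
  constructor
  · intro hbij
    by_contra hg
    have hinj : Function.Injective fun x : F => eval x (dickson 1 a d) := hbij.1
    have hg0 : Nat.gcd d (q ^ 2 - 1) ≠ 0 :=
      fun h => hd.ne' (Nat.eq_zero_of_gcd_eq_zero_left h)
    set l := (Nat.gcd d (q ^ 2 - 1)).minFac with hldef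
    have hl : l.Prime := Nat.minFac_prime hg
    have hld : l ∣ d := (Nat.minFac_dvd _).trans (Nat.gcd_dvd_left _ _)
    have hlq : l ∣ (q - 1) * (q + 1) :=
      hqq ▸ (Nat.minFac_dvd _).trans (Nat.gcd_dvd_right _ _)
    obtain ⟨m, c, hm3, hlm, hmne, hc0, hfix⟩ :
        ∃ (m : ℕ) (c : K), 3 ≤ m ∧ l ∣ m ∧ ¬ p ∣ m ∧ c ≠ 0 ∧
          ∀ y : K, y ≠ 0 → y ^ m = c → (y + φ a * y⁻¹) ^ q = y + φ a * y⁻¹ := by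
      by_cases hA : l ∣ q + 1
      · refine ⟨q + 1, φ a, by omega, hA, ?_, hφa0, ?_⟩
        · intro hpm
          have h1 : p ∣ 1 := by
            have := Nat.dvd_sub hpm (dvd_pow_self p hn.ne' : p ∣ q)
            rwa [Nat.add_sub_cancel_left] at this
          exact hp.one_lt.ne' (Nat.dvd_one.mp h1)
        · intro y hy0 hym
          have hyq : y ^ q * y = φ a := by rw [← pow_succ]; exact hym
          have hyq' : y ^ q = φ a * y⁻¹ := by linear_combination y⁻¹ * hyq - y ^ q * mul_inv_cancel₀ hy0
          have hmul : (q + 1) * (q - 1) + 1 = q * q := by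
            zify [show 1 ≤ q by omega]
            ring
          have hyqq : (y ^ q) ^ q = y := by
            calc (y ^ q) ^ q = y ^ (q * q) := by rw [← pow_mul]
              _ = (y ^ (q + 1)) ^ (q - 1) * y := by rw [← pow_mul, ← pow_succ, hmul]
              _ = (φ a) ^ (q - 1) * y := by rw [hym]
              _ = y := by rw [hfa, one_mul]
          rw [← hyq', hadd, hyqq, add_comm]
      · have hB : l ∣ q - 1 := ((Nat.Prime.dvd_mul hl).mp hlq).resolve_right hA
        have hl2 : l ≠ 2 := by
          intro h2
          rw [h2] at hB
          obtain ⟨k, hk⟩ := hB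
          rw [h2] at hA
          exact hA ⟨k + 1, by omega⟩
        have hm3 : 3 ≤ q - 1 := by
          have h4 := Nat.le_of_dvd (by omega) hB
          have h5 := hl.two_le
          omega
        refine ⟨q - 1, 1, hm3, hB, ?_, one_ne_zero, ?_⟩
        · intro hpm
          have h1 : p ∣ 1 := by
            have := Nat.dvd_sub (dvd_pow_self p hn.ne' : p ∣ q) hpm
            rwa [show q - (q - 1) = 1 by omega] at this
          exact hp.one_lt.ne' (Nat.dvd_one.mp h1)
        · intro y hy0 hym
          have hyq : y ^ q = y := by
            have h6 : y ^ (q - 1) * y = y ^ q := by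
              rw [← pow_succ]
              congr 1
              omega
            rw [← h6, hym, one_mul]
          rw [hadd, hyq, mul_pow, inv_pow, hyq, hφq]
    have hmK : ((m : K)) ≠ 0 := fun h => hmne ((CharP.cast_eq_zero_iff K p m).mp h)
    have hlK : ((l : K)) ≠ 0 := by
      intro h
      have h1 : p ∣ l := (CharP.cast_eq_zero_iff K p l).mp h
      have h2 : p = l := (Nat.prime_dvd_prime_iff_eq hp hl).mp h1
      exact hmne (h2 ▸ hlm)
    -- find ζ of order dividing l, ζ ≠ 1
    have hζcard : ((X : K[X]) ^ l - C 1).roots.toFinset.card = l :=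
      roots_toFinset_card hlK one_ne_zero
    obtain ⟨ζ, hζmem, hζ1⟩ := Finset.exists_mem_ne
      (s := ((X : K[X]) ^ l - C 1).roots.toFinset) (by rw [hζcard]; exact hl.one_lt) 1
    have hζl : ζ ^ l = 1 := by
      have h1 := Multiset.mem_toFinset.mp hζmem
      rw [mem_roots (hne l 1 hl.ne_zero)] at h1
      simp only [IsRoot, eval_sub, eval_pow, eval_X, eval_C] at h1
      linear_combination h1
    have hζ0 : ζ ≠ 0 := by
      intro h
      rw [h, zero_pow hl.ne_zero] at hζl
      exact one_ne_zero hζl.symm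
    have hζm : ζ ^ m = 1 := by
      obtain ⟨k, rfl⟩ := hlm
      rw [pow_mul, hζl, one_pow]
    have hζd : ζ ^ d = 1 := by
      obtain ⟨k, hk⟩ := hld
      rw [hk, pow_mul, hζl, one_pow]
    -- choose y a root of X^m - c avoiding y^2 = φa * ζ⁻¹
    have hm0 : m ≠ 0 := by omega
    have hR : ((X : K[X]) ^ m - C c).roots.toFinset.card = m := roots_toFinset_card hmK hc0
    have hBcard : ((X : K[X]) ^ 2 - C (φ a * ζ⁻¹)).roots.toFinset.card ≤ 2 :=
      le_trans (Multiset.toFinset_card_le _)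
        (le_trans (card_roots' _) (le_of_eq natDegree_X_pow_sub_C))
    set Rs := ((X : K[X]) ^ m - C c).roots.toFinset with hRs
    set Bs := ((X : K[X]) ^ 2 - C (φ a * ζ⁻¹)).roots.toFinset with hBs
    have hRB : (Rs \ Bs).Nonempty := by
      rw [← Finset.card_pos]
      have h7 := Finset.le_card_sdiff Bs Rs
      omega
    obtain ⟨y, hy⟩ := hRB
    have hyR := (Finset.mem_sdiff.mp hy).1
    have hyB := (Finset.mem_sdiff.mp hy).2
    have hym : y ^ m = c := by
      have h1 := Multiset.mem_toFinset.mp hyR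
      rw [mem_roots (hne m c hm0)] at h1
      simp only [IsRoot, eval_sub, eval_pow, eval_X, eval_C] at h1
      linear_combination h1
    have hy0 : y ≠ 0 := by
      intro h
      rw [h, zero_pow hm0] at hym
      exact hc0 hym.symm
    have hζy0 : ζ * y ≠ 0 := mul_ne_zero hζ0 hy0
    have hζym : (ζ * y) ^ m = c := by rw [mul_pow, hζm, one_mul, hym]
    obtain ⟨u₁, hu₁⟩ := mem_range_of_pow_card_eq φ _ (by rw [hF]; exact hfix y hy0 hym)
    obtain ⟨u₂, hu₂⟩ := mem_range_of_pow_card_eq φ _ (by rw [hF]; exact hfix (ζ * y) hζy0 hζym)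
    have hD : eval u₁ (dickson 1 a d) = eval u₂ (dickson 1 a d) := by
      apply hφ
      rw [key u₁ y hy0 hu₁, key u₂ (ζ * y) hζy0 hu₂]
      have h8 : (φ a * (ζ * y)⁻¹) ^ d = (φ a * y⁻¹) ^ d := by
        rw [mul_inv, show φ a * (ζ⁻¹ * y⁻¹) = ζ⁻¹ * (φ a * y⁻¹) by ring,
          mul_pow, inv_pow, hζd, inv_one, one_mul]
      have h9 : (ζ * y) ^ d = y ^ d := by rw [mul_pow, hζd, one_mul]
      rw [h8, h9]
    have hu12 : u₁ = u₂ := hinj hD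
    have hxx : y + φ a * y⁻¹ = ζ * y + φ a * (ζ * y)⁻¹ := by
      rw [← hu₁, ← hu₂, hu12]
    rw [mul_inv] at hxx
    have e3 : y * y⁻¹ = 1 := mul_inv_cancel₀ hy0
    have e4 : ζ * ζ⁻¹ = 1 := mul_inv_cancel₀ hζ0
    have h5 : (ζ - 1) * (ζ * y ^ 2 - φ a) = 0 := by
      linear_combination (-(ζ * y)) * hxx + φ a * ζ * e3 - φ a * e3 - φ a * (y * y⁻¹) * e4
    have hfin : y ^ 2 = φ a * ζ⁻¹ := by
      rcases mul_eq_zero.mp h5 with h | h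
      · exact absurd (by linear_combination h) hζ1
      · have h6 : ζ * y ^ 2 = φ a := by linear_combination h
        linear_combination ζ⁻¹ * h6 - y ^ 2 * e4
    apply hyB
    rw [Multiset.mem_toFinset, mem_roots (hne 2 (φ a * ζ⁻¹) two_ne_zero)]
    simp [IsRoot, hfin]
  · intro hgcd
    apply Finite.injective_iff_bijective.mp
    intro x x' hxx'
    obtain ⟨y, hy0, hyu, hxy⟩ := hroot x
    obtain ⟨z, hz0, hzu, hxz⟩ := hroot x'
    have h1 : y ^ d + (φ a * y⁻¹) ^ d = z ^ d + (φ a * z⁻¹) ^ d := by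
      rw [← key x y hy0 hxy, ← key x' z hz0 hxz]
      exact congrArg φ hxx'
    simp only [mul_pow, inv_pow] at h1
    have hyd : y ^ d ≠ 0 := pow_ne_zero _ hy0
    have hzd : z ^ d ≠ 0 := pow_ne_zero _ hz0
    have e1 : y ^ d * (y ^ d)⁻¹ = 1 := mul_inv_cancel₀ hyd
    have e2 : z ^ d * (z ^ d)⁻¹ = 1 := mul_inv_cancel₀ hzd
    have h2 : (y ^ d - z ^ d) * (y ^ d * z ^ d - (φ a) ^ d) = 0 := by
      linear_combination (y ^ d * z ^ d) * h1 - (φ a) ^ d * z ^ d * e1 + (φ a) ^ d * y ^ d * e2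
    have hone : ∀ w : K, w ^ d = 1 → w ^ (q ^ 2 - 1) = 1 → w = 1 := by
      intro w hwd hwu
      have hord : orderOf w ∣ 1 :=
        hgcd ▸ Nat.dvd_gcd (orderOf_dvd_of_pow_eq_one hwd) (orderOf_dvd_of_pow_eq_one hwu)
      exact orderOf_eq_one_iff.mp (Nat.dvd_one.mp hord)
    have hxeq : φ x = φ x' := by
      rcases mul_eq_zero.mp h2 with h | h
      · have h3 : y ^ d = z ^ d := by linear_combination h
        have hw : y * z⁻¹ = 1 := by
          apply hone
          · rw [mul_pow, inv_pow, h3]; exact mul_inv_cancel₀ hzd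
          · rw [mul_pow, inv_pow, hyu, hzu]; norm_num
        have hyz : y = z := by
          linear_combination z * hw - y * mul_inv_cancel₀ hz0
        rw [hxy, hxz, hyz]
      · have h3 : y ^ d * z ^ d = (φ a) ^ d := by linear_combination h
        have hw : y * z * (φ a)⁻¹ = 1 := by
          apply hone
          · rw [mul_pow, mul_pow, inv_pow, h3]; exact mul_inv_cancel₀ (pow_ne_zero _ hφa0)
          · rw [mul_pow, mul_pow, inv_pow, hyu, hzu, hfa2]; norm_num
        have hyz : y * z = φ a := by
          linear_combination φ a * hw - y * z * mul_inv_cancel₀ hφa0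
        have hz' : φ a * y⁻¹ = z := by
          linear_combination -y⁻¹ * hyz + z * mul_inv_cancel₀ hy0
        have hy' : φ a * z⁻¹ = y := by
          linear_combination -z⁻¹ * hyz + y * mul_inv_cancel₀ hz0
        rw [hxy, hxz, hz', hy', add_comm]
    exact hφ hxeq
end

section
/- Let p be a prime, n a positive integer, c in F_p*, d a positive integer, and j in {0, 1, ..., n-1}. Then the c-differential uniformity of x ↦ x^d over F_{p^n} equals the c-differential uniformity of x ↦ x^{d·p^j} over F_{p^n}. Equivalently, for every a, b in F_{p^n} there exists e in F_{p^n} such that {x : (x+a)^d - c·x^d = b} = {x : (x+a)^{d·p^j} - c·x^{d·p^j} = e}, and vice versa. -/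
/-- The `c`-differential uniformity of a function `f` on a finite field:
the maximum over `a, b` (with `a ≠ 0` required only when `c = 1`) of the number of
solutions `x` of `f (x + a) - c * f x = b`. -/
noncomputable def cDiffUnif {F : Type*} [Field F] [Fintype F] (c : F) (f : F → F) : ℕ :=
  sSup {m : ℕ | ∃ a b : F, (c = 1 → a ≠ 0) ∧ m = Nat.card {x : F // f (x + a) - c * f x = b}}

theorem stmt_12 (p n d j : ℕ) (hp : p.Prime) (hn : 0 < n) (hd : 0 < d) (hj : j < n)
    (F : Type) [Field F] [Fintype F] [Algebra (ZMod p) F] (hF : Fintype.card F = p ^ n)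
    (c : F) (hc0 : c ≠ 0) (hcFp : ∃ c₀ : ZMod p, c = algebraMap (ZMod p) F c₀) :
    cDiffUnif c (fun x : F => x ^ d) = cDiffUnif c (fun x : F => x ^ (d * p ^ j)) := by
  have : Fact p.Prime := ⟨hp⟩
  haveI hchar : CharP F p := charP_of_injective_algebraMap' (A := F) (ZMod p) p
  haveI : ExpChar F p := ExpChar.prime hp
  -- c is fixed by the Frobenius power
  have hc : c ^ p ^ j = c := by
    obtain ⟨c₀, rfl⟩ := hcFp
    rw [← map_pow, ZMod.pow_card_pow]
  -- key algebraic identity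
  have key : ∀ a x : F, (x + a) ^ (d * p ^ j) - c * x ^ (d * p ^ j)
      = ((x + a) ^ d - c * x ^ d) ^ p ^ j := by
    intro a x
    rw [sub_pow_expChar_pow, mul_pow, hc, pow_mul, pow_mul]
  -- Frobenius power as bijection
  have hinj : Function.Injective (fun y : F => y ^ p ^ j) := by
    have := (iterateFrobenius F p j).injective
    simpa [iterateFrobenius_def, Function.Injective] using this
  have hsurj : Function.Surjective (fun y : F => y ^ p ^ j) :=
    Finite.surjective_of_injective hinj
  unfold cDiffUnif
  congr 1
  ext m
  constructor
  · rintro ⟨a, b, h1, h2⟩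
    refine ⟨a, b ^ p ^ j, h1, ?_⟩
    rw [h2]
    apply Nat.card_congr
    apply Equiv.subtypeEquivRight
    intro x
    rw [key a x]
    exact ⟨fun h => by rw [h], fun h => hinj h⟩
  · rintro ⟨a, b, h1, h2⟩
    obtain ⟨e, rfl⟩ := hsurj b
    refine ⟨a, e, h1, ?_⟩
    rw [h2]
    apply Nat.card_congr
    apply Equiv.subtypeEquivRight
    intro x
    rw [key a x]
    exact ⟨fun h => hinj h, fun h => by rw [h]⟩
end

section
/- Let p be a prime, c = 1 or c = -1 in F_{p^n}, and d a positive integer with gcd(d, p^n - 1) = 1. Let d' be the multiplicative inverse of d modulo p^n - 1. Then the c-differential uniformity of x ↦ x^d over F_{p^n} equals the c-differential uniformity of x ↦ x^{d'} over F_{p^n}. -/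
lemma incl_aux {F : Type*} [Field F] [Fintype F] (c : F) (hc2 : c ^ 2 = 1) (e e' : ℕ)
    (hce : c ^ e = c) (hce' : c ^ e' = c)
    (h1 : ∀ x : F, (x ^ e) ^ e' = x) (h2 : ∀ x : F, (x ^ e') ^ e = x) :
    {m : ℕ | ∃ a b : F, (c = 1 → a ≠ 0) ∧
        m = Nat.card {x : F // (x + a) ^ e - c * x ^ e = b}} ⊆
    {m : ℕ | ∃ a b : F, (c = 1 → a ≠ 0) ∧
        m = Nat.card {x : F // (x + a) ^ e' - c * x ^ e' = b}} := by
  have inj_e : Function.Injective (fun x : F => x ^ e) :=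
    Function.LeftInverse.injective (g := fun x : F => x ^ e') h1
  have inj_e' : Function.Injective (fun x : F => x ^ e') :=
    Function.LeftInverse.injective (g := fun x : F => x ^ e) h2
  have key : ∀ a b : F, Nat.card {x : F // (x + a) ^ e - c * x ^ e = b}
      = Nat.card {y : F // (y + b) ^ e' - c * y ^ e' = a} := by
    intro a b
    apply Nat.card_congr
    exact
      { toFun := fun x => ⟨c * (x : F) ^ e, by
          have hx := x.2
          have hb : c * (x : F) ^ e + b = ((x : F) + a) ^ e := by linear_combination -hx
          show (c * (x : F) ^ e + b) ^ e' - c * (c * (x : F) ^ e) ^ e' = a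
          rw [hb, h1, mul_pow, hce', h1]
          linear_combination (-(x : F)) * hc2⟩
        invFun := fun y => ⟨c * (y : F) ^ e', by
          have hy := y.2
          have ha : c * (y : F) ^ e' + a = ((y : F) + b) ^ e' := by linear_combination -hy
          show (c * (y : F) ^ e' + a) ^ e - c * (c * (y : F) ^ e') ^ e = b
          rw [ha, h2, mul_pow, hce, h2]
          linear_combination (-(y : F)) * hc2⟩
        left_inv := fun x => Subtype.ext (by
          show c * (c * (x : F) ^ e) ^ e' = x
          rw [mul_pow, hce', h1]
          linear_combination (x : F) * hc2)
        right_inv := fun y => Subtype.ext (by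
          show c * (c * (y : F) ^ e') ^ e = y
          rw [mul_pow, hce, h2]
          linear_combination (y : F) * hc2) }
  rintro m ⟨a, b, hab, rfl⟩
  by_cases hc1 : c = 1
  · have ha : a ≠ 0 := hab hc1
    by_cases hb : b = 0
    · subst hb
      have he0 : Nat.card {x : F // (x + a) ^ e - c * x ^ e = 0} = 0 := by
        have : IsEmpty {x : F // (x + a) ^ e - c * x ^ e = 0} := by
          refine ⟨fun z => ?_⟩
          obtain ⟨x, hx⟩ := z
          rw [hc1, one_mul, sub_eq_zero] at hx
          exact ha (by linear_combination inj_e hx)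
        exact Nat.card_of_isEmpty
      have he'0 : Nat.card {x : F // (x + a) ^ e' - c * x ^ e' = 0} = 0 := by
        have : IsEmpty {x : F // (x + a) ^ e' - c * x ^ e' = 0} := by
          refine ⟨fun z => ?_⟩
          obtain ⟨x, hx⟩ := z
          rw [hc1, one_mul, sub_eq_zero] at hx
          exact ha (by linear_combination inj_e' hx)
        exact Nat.card_of_isEmpty
      exact ⟨a, 0, fun _ => ha, by rw [he0, he'0]⟩
    · exact ⟨b, a, fun _ => hb, key a b⟩
  · exact ⟨b, a, fun h => absurd h hc1, key a b⟩

theorem stmt_13 (p n d d' : ℕ) (hp : p.Prime) (hn : 0 < n) (hd : 0 < d) (hd' : 0 < d')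
    (hgcd : Nat.gcd d (p ^ n - 1) = 1) (hinv : d * d' ≡ 1 [MOD p ^ n - 1])
    (F : Type) [Field F] [Fintype F] (hF : Fintype.card F = p ^ n)
    (c : F) (hc : c = 1 ∨ c = -1) :
    cDiffUnif c (fun x : F => x ^ d) = cDiffUnif c (fun x : F => x ^ d') := by
  have hq : 1 < p ^ n := Nat.one_lt_pow (by omega) hp.one_lt
  have hs1 : 1 ≤ d * d' := Nat.mul_pos hd hd'
  have hdvd : (p ^ n - 1) ∣ d * d' - 1 := (Nat.modEq_iff_dvd' hs1).mp hinv.symm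
  obtain ⟨k, hk0⟩ := hdvd
  have hk : d * d' = 1 + (p ^ n - 1) * k := by omega
  have hcard : ∀ x : F, x ≠ 0 → x ^ (p ^ n - 1) = 1 := fun x hx => by
    rw [← hF]; exact FiniteField.pow_card_sub_one_eq_one x hx
  have hdd : ∀ x : F, x ^ (d * d') = x := by
    intro x
    by_cases hx : x = 0
    · subst hx; rw [zero_pow (by omega)]
    · rw [hk, pow_add, pow_one, pow_mul, hcard x hx, one_pow, mul_one]
  have h1 : ∀ x : F, (x ^ d) ^ d' = x := fun x => by rw [← pow_mul]; exact hdd x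
  have h2 : ∀ x : F, (x ^ d') ^ d = x := fun x => by
    rw [← pow_mul, mul_comm]; exact hdd x
  have hc2 : c ^ 2 = 1 := by rcases hc with rfl | rfl
                             · rw [one_pow]
                             · rw [neg_one_sq]
  have hoddpair : (-1 : F) = 1 ∨ (Odd d ∧ Odd d') := by
    by_cases hm : (-1 : F) = 1
    · exact Or.inl hm
    · right
      have h2dvd : 2 ∣ p ^ n - 1 := by
        letI := Classical.decEq F
        have hu2 : (-1 : Fˣ) ^ 2 = 1 := by simp
        have hu1 : (-1 : Fˣ) ≠ 1 := by
          intro h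
          apply hm
          have := congrArg (Units.val) h
          simpa using this
        have ho : orderOf (-1 : Fˣ) = 2 := orderOf_eq_prime hu2 hu1
        have := orderOf_dvd_card (x := (-1 : Fˣ))
        rwa [ho, Fintype.card_units, hF] at this
      constructor
      · rw [Nat.odd_iff]
        rcases Nat.even_or_odd d with he | ho
        · exfalso
          have : (2 : ℕ) ∣ Nat.gcd d (p ^ n - 1) :=
            Nat.dvd_gcd he.two_dvd h2dvd
          rw [hgcd] at this; omega
        · exact Nat.odd_iff.mp ho
      · rw [Nat.odd_iff]
        rcases Nat.even_or_odd d' with he | ho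
        · exfalso
          have e1 : 2 ∣ d * d' := Dvd.dvd.mul_left he.two_dvd d
          obtain ⟨t, ht⟩ := h2dvd
          have e2 : d * d' = 1 + 2 * (t * k) := by rw [hk, ht]; ring
          obtain ⟨s, hs⟩ := e1
          omega
        · exact Nat.odd_iff.mp ho
  have hce : c ^ d = c := by
    rcases hc with rfl | rfl
    · exact one_pow d
    · rcases hoddpair with hm | ⟨hod, _⟩
      · rw [hm]; exact one_pow d
      · exact hod.neg_one_pow
  have hce' : c ^ d' = c := by
    rcases hc with rfl | rfl
    · exact one_pow d'
    · rcases hoddpair with hm | ⟨_, hod⟩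
      · rw [hm]; exact one_pow d'
      · exact hod.neg_one_pow
  simp only [cDiffUnif]
  congr 1
  apply Set.Subset.antisymm
  · exact incl_aux c hc2 d d' hce hce' h1 h2
  · exact incl_aux c hc2 d' d hce' hce h2 h1
end

section
/- Let p be a prime, c in F_p with c ≠ 1, let L : F_{p^n} → F_{p^n} be a p-to-1 linearized polynomial (so its kernel has exactly p elements), γ in F_{p^n}*, and f : F_{p^n} → F_p an arbitrary function. Suppose F = L + γ·f (viewing F_p ⊂ F_{p^n}) is a permutation of F_{p^n}. Then F is perfect c-nonlinear if and only if for every nonzero a in F_{p^n} both of the following hold: (i) γ is not in the image of L; and (ii) for all x in F_{p^n} and all nonzero ε in the kernel of L, D_a f(x+ε) ≠ D_a f(x), where D_a f(x) := f(x+a) - c·f(x). -/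
theorem stmt_16 (p n : ℕ) (hp : p.Prime) (hn : 0 < n)
    (F : Type) [Field F] [Fintype F] [Algebra (ZMod p) F] (hF : Fintype.card F = p ^ n)
    (c₀ : ZMod p) (hc : c₀ ≠ 1)
    (L : F → F) (hLadd : ∀ x y, L (x + y) = L x + L y)
    (hLsmul : ∀ (s : ZMod p) (x : F),
      L (algebraMap (ZMod p) F s * x) = algebraMap (ZMod p) F s * L x)
    (hker : Nat.card {x : F // L x = 0} = p)
    (γ : F) (hγ : γ ≠ 0) (f : F → ZMod p)
    (hperm : Function.Bijective fun x : F => L x + γ * algebraMap (ZMod p) F (f x)) :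
    (∀ a : F, Function.Bijective fun x : F =>
        (L (x + a) + γ * algebraMap (ZMod p) F (f (x + a))) -
          algebraMap (ZMod p) F c₀ * (L x + γ * algebraMap (ZMod p) F (f x))) ↔
      ∀ a : F, a ≠ 0 →
        (γ ∉ Set.range L ∧
          ∀ x ε : F, ε ≠ 0 → L ε = 0 →
            f (x + ε + a) - c₀ * f (x + ε) ≠ f (x + a) - c₀ * f x) := by
  haveI := Fact.mk hp
  set A := algebraMap (ZMod p) F with hAdef
  have hA : Function.Injective A := RingHom.injective _
  have L0 : L 0 = 0 := by
    have h := hLadd 0 0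
    simp only [add_zero] at h
    exact (left_eq_add.mp h)
  have Lsub : ∀ x y : F, L (x - y) = L x - L y := by
    intro x y
    have h := hLadd (x - y) y
    simp only [sub_add_cancel] at h
    linear_combination -h
  -- a nonzero kernel element
  have hcard : 1 < Nat.card {x : F // L x = 0} := by rw [hker]; exact hp.one_lt
  have hnt : Nontrivial {x : F // L x = 0} := Finite.one_lt_card_iff_nontrivial.mp hcard
  obtain ⟨ε₀, hε₀⟩ := exists_ne (⟨0, L0⟩ : {x : F // L x = 0})
  have hε₀ne : (ε₀ : F) ≠ 0 := fun h => hε₀ (Subtype.ext h)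
  -- γ is not in the range of L (from hperm)
  have hγL : γ ∉ Set.range L := by
    rintro ⟨w, hw⟩
    have hninj : ¬ Function.Injective L := by
      intro h
      exact hε₀ne (h (ε₀.2.trans L0.symm))
    have hnsurj : ¬ Function.Surjective L := fun h =>
      hninj (Finite.injective_iff_surjective.mpr h)
    rw [Function.Surjective] at hnsurj
    push_neg at hnsurj
    obtain ⟨y, hy⟩ := hnsurj
    obtain ⟨x, hx⟩ := hperm.2 y
    apply hy (x + A (f x) * w)
    have : L (x + A (f x) * w) = L x + A (f x) * L w := by
      rw [hLadd, hLsmul]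
    rw [this, hw]
    simpa [mul_comm] using hx
  have he : A (1 - c₀) ≠ 0 := by
    intro h
    apply hc
    have h1 : (1 - c₀ : ZMod p) = 0 := hA (by simpa using h)
    have := sub_eq_zero.mp h1
    exact this.symm
  -- key formula
  have key : ∀ a x : F,
      (L (x + a) + γ * A (f (x + a))) - A c₀ * (L x + γ * A (f x))
        = L (A (1 - c₀) * x + a) + γ * A (f (x + a) - c₀ * f x) := by
    intro a x
    rw [hLadd (A (1 - c₀) * x) a, hLsmul, hLadd x a]
    rw [map_sub A, map_sub A, map_one, map_mul]
    ring
  constructor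
  · intro hbij a ha
    refine ⟨hγL, ?_⟩
    intro x ε hεne hεker heq
    have h2 : A (1 - c₀) * (x + ε) + a = (A (1 - c₀) * x + a) + A (1 - c₀) * ε := by ring
    have h1 : (L ((x + ε) + a) + γ * A (f ((x + ε) + a)))
        - A c₀ * (L (x + ε) + γ * A (f (x + ε)))
        = (L (x + a) + γ * A (f (x + a))) - A c₀ * (L x + γ * A (f x)) := by
      rw [key, key, heq, h2, hLadd, hLsmul, hεker, mul_zero, add_zero]
    have h3 : x + ε = x := (hbij a).1 h1
    exact hεne (add_eq_left.mp h3)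
  · intro hcond a
    by_cases ha : a = 0
    · subst ha
      have hfe : (fun x : F =>
          (L (x + 0) + γ * A (f (x + 0))) - A c₀ * (L x + γ * A (f x)))
          = fun x : F => A (1 - c₀) * (L x + γ * A (f x)) := by
        funext x
        rw [add_zero, map_sub A, map_one]
        ring
      rw [hfe]
      exact (mulLeft_bijective₀ _ he).comp hperm
    · apply Finite.injective_iff_bijective.mp
      intro x₁ x₂ h
      obtain ⟨hγ', hf'⟩ := hcond a ha
      by_contra hne
      simp only [] at h
      rw [key, key] at h
      set t : ZMod p := (f (x₂ + a) - c₀ * f x₂) - (f (x₁ + a) - c₀ * f x₁) with ht_def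
      have h4 : L (A (1 - c₀) * (x₁ - x₂)) = γ * A t := by
        have hx : A (1 - c₀) * (x₁ - x₂)
            = (A (1 - c₀) * x₁ + a) - (A (1 - c₀) * x₂ + a) := by ring
        have hAt : A t = A (f (x₂ + a) - c₀ * f x₂) - A (f (x₁ + a) - c₀ * f x₁) :=
          map_sub A _ _
        rw [hx, Lsub, hAt]
        linear_combination h
      by_cases ht : t = 0
      · rw [ht, map_zero, mul_zero] at h4
        rw [hLsmul] at h4
        have hLδ : L (x₁ - x₂) = 0 := by
          rcases mul_eq_zero.mp h4 with h5 | h5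
          · exact absurd h5 he
          · exact h5
        have hεne : x₁ - x₂ ≠ 0 := sub_ne_zero.mpr hne
        apply hf' x₂ (x₁ - x₂) hεne hLδ
        have hx : x₂ + (x₁ - x₂) = x₁ := by ring
        rw [hx]
        have := sub_eq_zero.mp ht
        linear_combination -this
      · apply hγ'
        refine ⟨A t⁻¹ * (A (1 - c₀) * (x₁ - x₂)), ?_⟩
        rw [hLsmul, h4, mul_comm γ (A t), ← mul_assoc, ← map_mul,
          inv_mul_cancel₀ ht, map_one, one_mul]
end

section
/- Let p be a prime, n a positive integer, and α, γ in F_{p^n}. Define F(x) = x + γ·Tr(x^p - α·x), where Tr is the absolute trace from F_{p^n} to F_p (with F_p embedded in F_{p^n}). Then F is perfect c-nonlinear for all c in F_{p^n} with c ≠ 1 if and only if Tr(γ·(1 - α)) ≠ -1. -/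
section aux

variable {p : ℕ} [Fact p.Prime] {F : Type} [Field F] [Fintype F] [Algebra (ZMod p) F]

noncomputable def frobAlg : F ≃ₐ[ZMod p] F := by
  haveI : CharP F p := charP_of_injective_algebraMap (algebraMap (ZMod p) F).injective p
  exact AlgEquiv.ofRingEquiv (f := frobeniusEquiv F p) (fun c => by
    show frobenius F p _ = _
    rw [frobenius_def, ← map_pow, ZMod.pow_card])

lemma trace_pow_p (x : F) :
    Algebra.trace (ZMod p) F (x ^ p) = Algebra.trace (ZMod p) F x := by
  have := Algebra.trace_eq_of_algEquiv (frobAlg (p := p) (F := F)) x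
  simpa [frobAlg, frobeniusEquiv_def, frobenius_def] using this

lemma trace_key (α x : F) :
    Algebra.trace (ZMod p) F (x ^ p - α * x) = Algebra.trace (ZMod p) F ((1 - α) * x) := by
  have h1 : (1 - α) * x = x - α * x := by ring
  rw [h1, map_sub, map_sub, trace_pow_p]

end aux

theorem stmt_17 (p n : ℕ) (hp : p.Prime) (hn : 0 < n)
    (F : Type) [Field F] [Fintype F] [Algebra (ZMod p) F] (hF : Fintype.card F = p ^ n)
    (α γ : F) :
    (∀ c : F, c ≠ 1 → ∀ a : F, Function.Bijective fun x : F =>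
        ((x + a) + γ * algebraMap (ZMod p) F
            (Algebra.trace (ZMod p) F ((x + a) ^ p - α * (x + a)))) -
          c * (x + γ * algebraMap (ZMod p) F (Algebra.trace (ZMod p) F (x ^ p - α * x)))) ↔
      Algebra.trace (ZMod p) F (γ * (1 - α)) ≠ -1 := by
  haveI : Fact p.Prime := ⟨hp⟩
  let ι := algebraMap (ZMod p) F
  let T : F →ₗ[ZMod p] ZMod p := Algebra.trace (ZMod p) F
  let L : F → F := fun x => x + γ * ι (T ((1 - α) * x))
  have Ladd : ∀ x y : F, L (x + y) = L x + L y := by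
    intro x y
    show (x + y) + γ * ι (T ((1 - α) * (x + y))) = _
    rw [show (1 - α) * (x + y) = (1 - α) * x + (1 - α) * y by ring, map_add, map_add]
    show _ = (x + γ * ι (T ((1 - α) * x))) + (y + γ * ι (T ((1 - α) * y)))
    ring
  have Lzero : L 0 = 0 := by simp [L, T, ι]
  have key : Function.Bijective L ↔ Algebra.trace (ZMod p) F (γ * (1 - α)) ≠ -1 := by
    constructor
    · intro hb hcon
      have hγ : γ ≠ 0 := by
        intro h
        rw [h] at hcon
        simp only [zero_mul, map_zero] at hcon
        exact one_ne_zero (neg_eq_zero.mp hcon.symm)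
      have hLγ : L γ = 0 := by
        show γ + γ * ι (T ((1 - α) * γ)) = 0
        have h1 : T ((1 - α) * γ) = -1 := by rw [mul_comm] at hcon; exact hcon
        rw [h1]
        simp [ι]
      exact hγ (hb.injective (by rw [hLγ, Lzero]))
    · intro htr
      rw [← Finite.injective_iff_bijective]
      have hker : ∀ x : F, L x = 0 → x = 0 := by
        intro x hx
        have hx' : x = -(γ * ι (T ((1 - α) * x))) :=
          eq_neg_of_add_eq_zero_left hx
        set t := T ((1 - α) * x) with ht
        have hTs : T (ι t * ((1 - α) * γ)) = t * T ((1 - α) * γ) := by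
          rw [← Algebra.smul_def, map_smul, smul_eq_mul]
        have htt : t = -(t * T ((1 - α) * γ)) := by
          conv_lhs => rw [ht, hx']
          rw [show (1 - α) * -(γ * ι t) = -(ι t * ((1 - α) * γ)) by ring, map_neg, hTs]
        have hne : (1 : ZMod p) + T ((1 - α) * γ) ≠ 0 := by
          intro h
          apply htr
          have : T ((1 - α) * γ) = -1 := by linear_combination h
          rw [mul_comm γ]
          exact this
        have ht0 : t = 0 := by
          have hmul : t * (1 + T ((1 - α) * γ)) = 0 := by linear_combination htt
          rcases mul_eq_zero.mp hmul with h | h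
          · exact h
          · exact absurd h hne
        rw [hx', ht0]
        simp [ι]
      intro x y hxy
      have hsub : L (x - y) = 0 := by
        have h1 : L ((x - y) + y) = L (x - y) + L y := Ladd _ _
        rw [sub_add_cancel, hxy] at h1
        have := h1.symm
        rw [add_eq_right] at this
        exact this
      exact sub_eq_zero.mp (hker _ hsub)
  constructor
  · intro h
    have h0 := h 0 (by simp) 0
    have heq : (fun x : F =>
        ((x + 0) + γ * algebraMap (ZMod p) F
            (Algebra.trace (ZMod p) F ((x + 0) ^ p - α * (x + 0)))) -
          0 * (x + γ * algebraMap (ZMod p) F (Algebra.trace (ZMod p) F (x ^ p - α * x)))) = L := by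
      funext x
      show _ = x + γ * ι (T ((1 - α) * x))
      rw [add_zero, zero_mul, sub_zero, trace_key]
    rw [heq] at h0
    exact key.mp h0
  · intro htr c hc a
    have hmap : (fun x : F =>
        ((x + a) + γ * algebraMap (ZMod p) F
            (Algebra.trace (ZMod p) F ((x + a) ^ p - α * (x + a)))) -
          c * (x + γ * algebraMap (ZMod p) F (Algebra.trace (ZMod p) F (x ^ p - α * x)))) =
        fun x => (1 - c) * L x + L a := by
      funext x
      show ((x + a) + γ * ι (T ((x + a) ^ p - α * (x + a)))) -
          c * (x + γ * ι (T (x ^ p - α * x))) = _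
      rw [trace_key, trace_key]
      show _ = (1 - c) * (x + γ * ι (T ((1 - α) * x))) + (a + γ * ι (T ((1 - α) * a)))
      rw [show (1 - α) * (x + a) = (1 - α) * x + (1 - α) * a by ring, map_add, map_add]
      ring
    rw [hmap]
    have hLb : Function.Bijective L := key.mpr htr
    have h1c : (1 - c) ≠ 0 := sub_ne_zero.mpr (fun h => hc h.symm)
    constructor
    · intro x y hxy
      simp only [add_left_inj] at hxy
      exact hLb.injective (mul_left_cancel₀ h1c hxy)
    · intro y
      obtain ⟨x, hx⟩ := hLb.surjective ((1 - c)⁻¹ * (y - L a))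
      refine ⟨x, ?_⟩
      show (1 - c) * L x + L a = y
      rw [hx]
      field_simp
      ring
end

section
/- Let p be a prime, k ≥ 1, n ≥ 2, c in F_{p^n} with c ≠ 1, and γ in F_{p^n}*. Suppose there exists a in F_{p^n}* with Tr(a/(1-c)) ≠ 0 and γ = -a^{p^k+1} / (Tr(a/(1-c))·(1-c)²). Then G₁(x) = x^{p^k+1} + γ·Tr(x) is not perfect c-nonlinear; specifically, the c-derivative x ↦ G₁(x+a) - c·G₁(x) is not injective (it maps both 0 and -a/(1-c) to the same value). -/
theorem stmt_18 (p n k : ℕ) (hp : p.Prime) (hk : 1 ≤ k) (hn : 2 ≤ n)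
    (F : Type) [Field F] [Fintype F] [Algebra (ZMod p) F] (hF : Fintype.card F = p ^ n)
    (c : F) (hc : c ≠ 1) (γ a : F) (ha : a ≠ 0)
    (htr : Algebra.trace (ZMod p) F (a / (1 - c)) ≠ 0)
    (hγ : γ = -a ^ (p ^ k + 1) /
        (algebraMap (ZMod p) F (Algebra.trace (ZMod p) F (a / (1 - c))) * (1 - c) ^ 2)) :
    (fun x : F => ((x + a) ^ (p ^ k + 1) +
          γ * algebraMap (ZMod p) F (Algebra.trace (ZMod p) F (x + a))) -
        c * (x ^ (p ^ k + 1) + γ * algebraMap (ZMod p) F (Algebra.trace (ZMod p) F x))) 0 =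
      (fun x : F => ((x + a) ^ (p ^ k + 1) +
          γ * algebraMap (ZMod p) F (Algebra.trace (ZMod p) F (x + a))) -
        c * (x ^ (p ^ k + 1) + γ * algebraMap (ZMod p) F (Algebra.trace (ZMod p) F x)))
        (-(a / (1 - c))) ∧
      ¬ Function.Injective fun x : F => ((x + a) ^ (p ^ k + 1) +
          γ * algebraMap (ZMod p) F (Algebra.trace (ZMod p) F (x + a))) -
        c * (x ^ (p ^ k + 1) + γ * algebraMap (ZMod p) F (Algebra.trace (ZMod p) F x)) := by
  haveI : Fact p.Prime := ⟨hp⟩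
  haveI : CharP F p :=
    charP_of_injective_algebraMap (algebraMap (ZMod p) F).injective p
  have hu : (1 : F) - c ≠ 0 := sub_ne_zero.mpr (Ne.symm hc)
  set q := p ^ k with hqdef
  have hfrob : (1 - c) ^ q = 1 - c ^ q := by
    rw [hqdef, sub_pow_char_pow, one_pow]
  have hneg : (-1 : F) ^ q = -1 := by
    rw [hqdef, ← iterateFrobenius_def, map_neg, map_one]
  set s : F := a / (1 - c) with hs
  have hsne : s ≠ 0 := div_ne_zero ha hu
  have harg : -s + a = c * -s := by
    rw [hs]; field_simp; ring
  set t : F := algebraMap (ZMod p) F (Algebra.trace (ZMod p) F s) with ht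
  have htne : t ≠ 0 := by
    rw [ht]
    intro h
    exact htr ((injective_iff_map_eq_zero _).mp (algebraMap (ZMod p) F).injective _ h)
  have hnegs : (-s) ^ (q + 1) = s ^ (q + 1) := by
    rw [neg_pow, pow_succ, hneg]; ring
  have hpoly : (1 - c) ^ (q + 1) = c ^ (q + 1) - c + (1 - c) ^ q := by
    rw [pow_succ, pow_succ, hfrob]; ring
  have core : a ^ (q + 1) = (c ^ (q + 1) - c) * s ^ (q + 1) - (1 - c) * γ * t := by
    rw [hγ, hs, div_pow]
    field_simp
    linear_combination (-c * (1 - c)) * hfrob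
  have key : (fun x : F => ((x + a) ^ (q + 1) +
          γ * algebraMap (ZMod p) F (Algebra.trace (ZMod p) F (x + a))) -
        c * (x ^ (q + 1) + γ * algebraMap (ZMod p) F (Algebra.trace (ZMod p) F x))) 0 =
      (fun x : F => ((x + a) ^ (q + 1) +
          γ * algebraMap (ZMod p) F (Algebra.trace (ZMod p) F (x + a))) -
        c * (x ^ (q + 1) + γ * algebraMap (ZMod p) F (Algebra.trace (ZMod p) F x)))
        (-s) := by
    simp only [zero_add, map_zero, mul_zero, add_zero, map_add, map_neg, mul_neg, ← ht]
    rw [harg, mul_pow, hnegs, zero_pow (Nat.succ_ne_zero q)]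
    linear_combination core
  refine ⟨key, fun hinj => ?_⟩
  have h0 : (0 : F) = -s := hinj key
  exact hsne (neg_eq_zero.mp h0.symm)
end
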